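/- arXiv:math/9809108 — 8 statements merged into one kernel-verified Lean document; each statement's English description precedes it below -/
import Mathlib

section
/- Let p and q be primes. The groups PSL₂(ℤ[1/p]) and PSL₂(ℤ[1/q]) are abstractly commensurable, i.e. possess isomorphic finite-index subgroups, if and only if p = q. -/
/-- The subring `ℤ[1/p]` of `ℚ`, i.e. the smallest subring of `ℚ` containing `1/p`;
its elements are exactly the rationals of the form `a / p ^ k` with `a ∈ ℤ`, `k ∈ ℕ`. -/
def ZOneOver (p : ℕ) : Subring ℚ := Subring.closure {((p : ℚ))⁻¹}

/-- `PSL₂(ℤ[1/p])`: the quotient of `SL₂(ℤ[1/p])` by its center. -/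
abbrev PSLZ (p : ℕ) : Type :=
  Matrix.SpecialLinearGroup (Fin 2) (ZOneOver p) ⧸
    Subgroup.center (Matrix.SpecialLinearGroup (Fin 2) (ZOneOver p))

/-- Two groups are abstractly commensurable if they possess isomorphic
finite-index subgroups. -/
def AbstractlyCommensurable (G H : Type*) [Group G] [Group H] : Prop :=
  ∃ (G' : Subgroup G) (H' : Subgroup H),
    G'.FiniteIndex ∧ H'.FiniteIndex ∧ Nonempty (G' ≃* H')


open Matrix

section AuxFinite

lemma not_dvd_orderOf_of_roots {F : Type*} [Group F] [Finite F] {p : ℕ} (hp : p.Prime)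
    {z : F} (h : ∀ n : ℕ, ∃ w : F, w ^ p ^ n = z) : ¬ p ∣ orderOf z := by
  obtain ⟨w, hw⟩ := h (Nat.card F)
  have hd0 : orderOf w ≠ 0 := (orderOf_pos w).ne'
  set d := orderOf w with hd
  have hvle : p ^ (d.factorization p) ≤ p ^ Nat.card F := by
    calc p ^ (d.factorization p) ≤ d := Nat.ordProj_le p hd0
    _ ≤ Nat.card F := Nat.le_of_dvd Nat.card_pos (orderOf_dvd_natCard w)
    _ ≤ p ^ Nat.card F := (Nat.lt_pow_self hp.one_lt).le
  have hv : d.factorization p ≤ Nat.card F :=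
    (Nat.pow_le_pow_iff_right hp.one_lt).mp hvle
  have hz : z ^ (d / p ^ (d.factorization p)) = 1 := by
    rw [← hw, ← pow_mul]
    apply orderOf_dvd_iff_pow_eq_one.mp
    rw [← hd]
    calc d = p ^ (d.factorization p) * (d / p ^ (d.factorization p)) :=
      (Nat.ordProj_mul_ordCompl_eq_self d p).symm
    _ ∣ p ^ Nat.card F * (d / p ^ (d.factorization p)) :=
      Nat.mul_dvd_mul_right (pow_dvd_pow p hv) _
  intro hdvd
  exact Nat.not_dvd_ordCompl hp hd0
    (hdvd.trans (orderOf_dvd_iff_pow_eq_one.mpr hz))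

end AuxFinite

section AuxMatrix
variable {R : Type*} [CommRing R]


/-- all entries of M divisible by c -/
def EDvd (c : R) (M : Matrix (Fin 2) (Fin 2) R) : Prop := ∀ i j, c ∣ M i j

lemma EDvd.mul {a b : R} {M N : Matrix (Fin 2) (Fin 2) R} (hM : EDvd a M) (hN : EDvd b N) :
    EDvd (a * b) (M * N) := by
  intro i j
  rw [Matrix.mul_apply]
  exact Finset.dvd_sum fun l _ => mul_dvd_mul (hM i l) (hN l j)

lemma EDvd.pow {a : R} {M : Matrix (Fin 2) (Fin 2) R} (hM : EDvd a M) :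
    ∀ i : ℕ, EDvd (a ^ (i+1)) (M ^ (i+1)) := by
  intro i
  induction i with
  | zero => simpa using hM
  | succ n ih => rw [pow_succ a, pow_succ M]; exact ih.mul hM

lemma EDvd.mono {a b : R} {M : Matrix (Fin 2) (Fin 2) R} (hab : b ∣ a) (hM : EDvd a M) :
    EDvd b M := fun i j => (hab.trans (hM i j))

lemma one_add_pow_p {p k : ℕ} (hp : p.Prime) (x : Matrix (Fin 2) (Fin 2) (ZMod (p^k)))
    (hx : EDvd ((p : ZMod (p^k))) x) : (1 + x) ^ p ^ k = 1 := by
  have key : ∀ m : ℕ, ∃ y : Matrix (Fin 2) (Fin 2) (ZMod (p^k)),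
      EDvd ((p : ZMod (p^k)) ^ (m+1)) y ∧ (1 + x) ^ p ^ m = 1 + y := by
    intro m
    induction m with
    | zero => exact ⟨x, by simpa using hx, by simp⟩
    | succ n ih =>
      obtain ⟨y, hy, hpow⟩ := ih
      refine ⟨(1 + y) ^ p - 1, ?_, by rw [pow_succ, pow_mul, hpow]; abel⟩
      have hbin : (1 + y) ^ p = ∑ i ∈ Finset.range (p + 1),
          (p.choose i : ℕ) • y ^ i := by
        rw [add_comm, (Commute.one_right y).add_pow]
        apply Finset.sum_congr rfl
        intro i _
        rw [one_pow, mul_one, nsmul_eq_mul]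
        exact ((Nat.cast_commute (p.choose i) (y^i)).eq).symm
      have hsum : (1 + y) ^ p - 1 = ∑ i ∈ Finset.range p,
          (p.choose (i+1) : ℕ) • y ^ (i+1) := by
        rw [hbin, Finset.sum_range_succ']
        simp
      rw [hsum]
      intro a b
      rw [Matrix.sum_apply]
      apply Finset.dvd_sum
      intro i hi
      have hsm : ((p.choose (i+1) : ℕ) • y ^ (i+1)) a b
          = (p.choose (i+1) : ZMod (p^k)) * (y ^ (i+1)) a b := by
        simp [Matrix.smul_apply, nsmul_eq_mul]
      rw [hsm]
      have hent : (p : ZMod (p^k)) ^ ((n+1)*(i+1)) ∣ (y ^ (i+1)) a b := by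
        obtain ⟨c, hc⟩ := (hy.pow i) a b
        exact ⟨c, by rw [hc, ← pow_mul]⟩
      rcases eq_or_lt_of_le (Nat.succ_le_of_lt (Finset.mem_range.mp hi)) with heq | hlt
      · -- i + 1 = p ≥ 2
        have h2 : n + 1 + 1 ≤ (n+1)*(i+1) := by
          have h2p := hp.two_le
          have : 2 ≤ i + 1 := by omega
          nlinarith
        exact Dvd.dvd.mul_left ((pow_dvd_pow _ h2).trans hent) _
      · -- i + 1 < p : p ∣ choose
        have hch : (p : ZMod (p^k)) ∣ (p.choose (i+1) : ZMod (p^k)) := by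
          obtain ⟨c, hc⟩ := hp.dvd_choose_self (Nat.succ_ne_zero i) hlt
          exact ⟨(c : ZMod (p^k)), by rw [hc]; push_cast; ring⟩
        have : (p:ZMod (p^k)) * (p:ZMod (p^k))^(n+1) ∣
            (p.choose (i+1) : ZMod (p^k)) * (y ^ (i+1)) a b :=
          mul_dvd_mul hch ((pow_dvd_pow _ (by nlinarith : n+1 ≤ (n+1)*(i+1))).trans hent)
        rwa [← pow_succ'] at this
  obtain ⟨y, hy, hpow⟩ := key k
  rw [hpow]
  have hz : ((p : ZMod (p^k)) ^ (k+1)) = 0 := by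
    have h0 : ((p^k : ℕ) : ZMod (p^k)) = 0 := ZMod.natCast_self _
    push_cast at h0
    rw [pow_succ, h0, zero_mul]
  have hy0 : y = 0 := by
    funext i j
    obtain ⟨c, hc⟩ := hy i j
    rw [hc, hz, zero_mul]
    rfl
  rw [hy0, add_zero]

end AuxMatrix

section AuxCenter

lemma center_sq (q : ℕ) {z : Matrix.SpecialLinearGroup (Fin 2) (ZOneOver q)}
    (hz : z ∈ Subgroup.center (Matrix.SpecialLinearGroup (Fin 2) (ZOneOver q))) :
    z ^ 2 = 1 := by
  obtain ⟨r, hr, hrz⟩ := Matrix.SpecialLinearGroup.mem_center_iff.mp hz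
  have hr2 : r ^ 2 = 1 := by simpa using hr
  apply Subtype.ext
  rw [Matrix.SpecialLinearGroup.coe_pow, ← hrz]
  show ((Matrix.scalar (Fin 2)) r) ^ 2 = (1 : Matrix (Fin 2) (Fin 2) (ZOneOver q))
  rw [← map_pow, hr2, _root_.map_one]

end AuxCenter

section psi

variable {p q : ℕ} [Fact p.Prime]

lemma zoneover_le_comap (hq : q.Prime) (hpq : ¬ (p:ℤ) ∣ (q:ℤ)) :
    ZOneOver q ≤ (PadicInt.subring p).comap (Rat.castHom ℚ_[p]) := by
  apply Subring.closure_le.mpr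
  intro x hx
  rw [Set.mem_singleton_iff] at hx
  subst hx
  show ‖(((q:ℚ)⁻¹ : ℚ) : ℚ_[p])‖ ≤ 1
  push_cast
  rw [norm_inv]
  have h1 : ‖((q:ℤ) : ℚ_[p])‖ = 1 :=
    le_antisymm (Padic.norm_int_le_one _)
      (not_lt.mp (fun h => hpq ((Padic.norm_intCast_lt_one_iff).mp h)))
  push_cast at h1
  rw [h1]
  norm_num

/-- the embedding `ℤ[1/q] → ℤ_p` -/
noncomputable def psi (hq : q.Prime) (hpq : ¬ (p:ℤ) ∣ (q:ℤ)) : (ZOneOver q) →+* ℤ_[p] where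
  toFun x := ⟨((x : ℚ) : ℚ_[p]), zoneover_le_comap hq hpq x.2⟩
  map_one' := Subtype.ext (by push_cast; rfl)
  map_mul' x y := Subtype.ext (by push_cast [PadicInt.coe_mul]; norm_cast)
  map_zero' := Subtype.ext (by push_cast; rfl)
  map_add' x y := Subtype.ext (by push_cast [PadicInt.coe_add]; norm_cast)

lemma psi_injective (hq : q.Prime) (hpq : ¬ (p:ℤ) ∣ (q:ℤ)) :
    Function.Injective (psi (p := p) hq hpq) := by
  intro x y h
  have := congrArg (Subtype.val) h
  simp only [psi] at this
  exact Subtype.ext (Rat.cast_injective (α := ℚ_[p]) this)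

end psi

section red
variable {p q : ℕ} [Fact p.Prime] (hq : q.Prime) (hpq : ¬ (p:ℤ) ∣ (q:ℤ))

/-- reduction mod p^k -/
noncomputable def rho (k : ℕ) : (ZOneOver q) →+* ZMod (p ^ k) :=
  (PadicInt.toZModPow k).comp (psi hq hpq)

noncomputable def rmap (k : ℕ) :
    Matrix.SpecialLinearGroup (Fin 2) (ZOneOver q) →*
      Matrix.SpecialLinearGroup (Fin 2) (ZMod (p ^ k)) :=
  Matrix.SpecialLinearGroup.map (rho hq hpq k)

lemma rmap_entry (k : ℕ) (A : Matrix.SpecialLinearGroup (Fin 2) (ZOneOver q)) (i j : Fin 2) :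
    ((rmap hq hpq k A : Matrix (Fin 2) (Fin 2) (ZMod (p ^ k)))) i j
      = rho hq hpq k ((A : Matrix (Fin 2) (Fin 2) (ZOneOver q)) i j) := rfl

lemma rmap_compat (k : ℕ) (A : Matrix.SpecialLinearGroup (Fin 2) (ZOneOver q)) (i j : Fin 2) :
    (ZMod.castHom (pow_dvd_pow p (by omega : 1 ≤ k + 1)) (ZMod (p ^ 1)))
      ((rmap hq hpq (k+1) A : Matrix (Fin 2) (Fin 2) (ZMod (p ^ (k+1))))  i j)
    = ((rmap hq hpq 1 A : Matrix (Fin 2) (Fin 2) (ZMod (p ^ 1)))) i j := by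
  rw [rmap_entry, rmap_entry, rho, rho]
  simp only [RingHom.comp_apply]
  exact RingHom.congr_fun (PadicInt.zmod_cast_comp_toZModPow 1 (k+1) (by omega)) _

lemma rmap_all_one (A : Matrix.SpecialLinearGroup (Fin 2) (ZOneOver q))
    (h : ∀ k : ℕ, rmap hq hpq (k+1) A = 1) : A = 1 := by
  apply Subtype.ext
  funext i j
  have key : psi (p := p) hq hpq ((A : Matrix (Fin 2) (Fin 2) (ZOneOver q)) i j)
      = psi (p := p) hq hpq ((1 : Matrix (Fin 2) (Fin 2) (ZOneOver q)) i j) := by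
    apply PadicInt.ext_of_toZModPow.mp
    intro n
    match n with
    | 0 =>
      haveI : Subsingleton (ZMod (p ^ 0)) := by rw [pow_zero]; infer_instance
      exact Subsingleton.elim _ _
    | (k+1) =>
      have h1 := congrArg (fun B => ((B : Matrix.SpecialLinearGroup (Fin 2) (ZMod (p^(k+1)))) :
        Matrix (Fin 2) (Fin 2) (ZMod (p^(k+1)))) i j) (h k)
      simp only [rmap_entry] at h1
      show (rho hq hpq (k+1)) _ = (rho hq hpq (k+1)) _
      rw [h1]
      show ((1 : Matrix.SpecialLinearGroup (Fin 2) (ZMod (p^(k+1)))) :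
        Matrix (Fin 2) (Fin 2) (ZMod (p^(k+1)))) i j = _
      fin_cases i <;> fin_cases j <;> simp [rho]
  exact psi_injective hq hpq key

lemma dvd_of_cast_eq_zero {k : ℕ} (a : ZMod (p^(k+1)))
    (h : (ZMod.castHom (pow_dvd_pow p (by omega : 1 ≤ k + 1)) (ZMod (p ^ 1))) a = 0) :
    (p : ZMod (p^(k+1))) ∣ a := by
  haveI : NeZero (p ^ (k+1)) := ⟨pow_ne_zero _ (Fact.out : p.Prime).ne_zero⟩
  have hval : ((a.val : ℕ) : ZMod (p ^ 1)) = 0 := by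
    rw [← h, ← ZMod.natCast_zmod_val a, map_natCast, ZMod.natCast_zmod_val]
  have hdvd : p ∣ a.val := by
    have := (ZMod.natCast_eq_zero_iff a.val (p ^ 1)).mp hval
    simpa using this
  obtain ⟨t, ht⟩ := hdvd
  refine ⟨(t : ZMod (p ^ (k+1))), ?_⟩
  rw [← ZMod.natCast_zmod_val a, ht]
  push_cast
  ring

end red

theorem finOrder_of_divisible (p q : ℕ) (hp : p.Prime) (hq : q.Prime) (hne : p ≠ q)
    (x : PSLZ q) (hroots : ∀ n : ℕ, ∃ y : PSLZ q, y ^ p ^ n = x) : IsOfFinOrder x := by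
  haveI : Fact p.Prime := ⟨hp⟩
  have hpq : ¬ (p:ℤ) ∣ (q:ℤ) := by
    rw [Int.natCast_dvd_natCast]
    intro h
    exact hne ((Nat.prime_dvd_prime_iff_eq hp hq).mp h)
  obtain ⟨X, hX⟩ := QuotientGroup.mk'_surjective
    (Subgroup.center (Matrix.SpecialLinearGroup (Fin 2) (ZOneOver q))) x
  have hZroots : ∀ n : ℕ, ∃ W, W ^ p ^ n = X ^ 2 := by
    intro n
    obtain ⟨y, hy⟩ := hroots n
    obtain ⟨Y, hY⟩ := QuotientGroup.mk'_surjective _ y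
    have hker : Y ^ p ^ n * X⁻¹ ∈ Subgroup.center
        (Matrix.SpecialLinearGroup (Fin 2) (ZOneOver q)) := by
      rw [← QuotientGroup.ker_mk' (Subgroup.center
        (Matrix.SpecialLinearGroup (Fin 2) (ZOneOver q))), MonoidHom.mem_ker]
      rw [_root_.map_mul, _root_.map_pow, _root_.map_inv, hY, hX, hy]
      exact mul_inv_cancel x
    refine ⟨Y ^ 2, ?_⟩
    have hcent := Subgroup.mem_center_iff.mp hker
    have hsq : (Y ^ 2) ^ p ^ n = (Y ^ p ^ n) ^ 2 := by
      rw [← pow_mul, ← pow_mul, mul_comm 2]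
    have hzx : Y ^ p ^ n = (Y ^ p ^ n * X⁻¹) * X := by group
    rw [hsq, hzx]
    calc ((Y ^ p ^ n * X⁻¹) * X) ^ 2
        = (Y ^ p ^ n * X⁻¹) * (X * (Y ^ p ^ n * X⁻¹)) * X := by
          rw [sq]; group
    _ = (Y ^ p ^ n * X⁻¹) * ((Y ^ p ^ n * X⁻¹) * X) * X := by rw [← hcent X]
    _ = (Y ^ p ^ n * X⁻¹) ^ 2 * X ^ 2 := by rw [sq, sq]; group
    _ = X ^ 2 := by rw [center_sq q hker, one_mul]
  haveI hne1 : NeZero (p ^ 1) := ⟨pow_ne_zero _ hp.ne_zero⟩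
  set c := Nat.card (Matrix.SpecialLinearGroup (Fin 2) (ZMod (p ^ 1))) with hc
  haveI : Fintype (ZMod (p ^ 1)) := ZMod.fintype _
  have hcpos : 0 < c := Nat.card_pos
  have hlev1 : (rmap hq hpq 1) ((X ^ 2) ^ c) = 1 := by
    rw [_root_.map_pow]
    exact pow_card_eq_one'
  have hlevk : ∀ k : ℕ, (rmap hq hpq (k+1)) ((X ^ 2) ^ c) = 1 := by
    intro k
    haveI : NeZero (p ^ (k+1)) := ⟨pow_ne_zero _ hp.ne_zero⟩
    have hnd : ¬ p ∣ orderOf ((rmap hq hpq (k+1)) (X ^ 2)) :=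
      not_dvd_orderOf_of_roots hp (fun n => by
        obtain ⟨W, hW⟩ := hZroots n
        exact ⟨(rmap hq hpq (k+1)) W, by rw [← _root_.map_pow, hW]⟩)
    have hME : EDvd ((p : ZMod (p ^ (k+1))))
        (((rmap hq hpq (k+1)) ((X ^ 2) ^ c) : Matrix (Fin 2) (Fin 2) (ZMod (p ^ (k+1)))) - 1) := by
      intro i j
      apply dvd_of_cast_eq_zero
      rw [Matrix.sub_apply, _root_.map_sub]
      rw [rmap_compat hq hpq k ((X ^ 2) ^ c) i j, hlev1]
      have : (ZMod.castHom (pow_dvd_pow p (by omega : 1 ≤ k + 1)) (ZMod (p ^ 1)))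
          ((1 : Matrix (Fin 2) (Fin 2) (ZMod (p ^ (k+1)))) i j)
          = ((1 : Matrix (Fin 2) (Fin 2) (ZMod (p ^ 1)))) i j := by
        rw [Matrix.one_apply, Matrix.one_apply, apply_ite
          (ZMod.castHom (pow_dvd_pow p (by omega : 1 ≤ k + 1)) (ZMod (p ^ 1))),
          _root_.map_one, _root_.map_zero]
      rw [this]
      simp
    have hMpow : ((rmap hq hpq (k+1)) ((X ^ 2) ^ c)) ^ (p ^ (k+1)) = 1 := by
      apply Subtype.ext
      rw [Matrix.SpecialLinearGroup.coe_pow]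
      have hM : ((rmap hq hpq (k+1)) ((X ^ 2) ^ c) : Matrix (Fin 2) (Fin 2) (ZMod (p ^ (k+1))))
          = 1 + (((rmap hq hpq (k+1)) ((X ^ 2) ^ c) : Matrix (Fin 2) (Fin 2) (ZMod (p ^ (k+1)))) - 1) := by
        abel
      rw [hM, one_add_pow_p hp _ hME]
      rfl
    have hd1 : orderOf ((rmap hq hpq (k+1)) ((X ^ 2) ^ c)) ∣ p ^ (k+1) :=
      orderOf_dvd_of_pow_eq_one hMpow
    have hd2 : orderOf ((rmap hq hpq (k+1)) ((X ^ 2) ^ c)) ∣ orderOf ((rmap hq hpq (k+1)) (X ^ 2)) := by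
      apply orderOf_dvd_of_pow_eq_one
      rw [_root_.map_pow, ← pow_mul, mul_comm, pow_mul, pow_orderOf_eq_one, one_pow]
    obtain ⟨j, hjle, hdj⟩ := (Nat.dvd_prime_pow hp).mp hd1
    have hj0 : j = 0 := by
      by_contra hj
      exact hnd (dvd_trans (hdj ▸ dvd_pow_self p hj) hd2)
    rw [← orderOf_eq_one_iff]
    rw [hdj, hj0, pow_zero]
  -- conclude (X^2)^c = 1
  have hXc : (X ^ 2) ^ c = 1 := rmap_all_one hq hpq _ hlevk
  refine isOfFinOrder_iff_pow_eq_one.mpr ⟨2 * c, by positivity, ?_⟩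
  rw [← hX, ← _root_.map_pow, pow_mul, hXc, _root_.map_one]


section uni
variable {p : ℕ}

/-- the unipotent matrix [[1,t],[0,1]] -/
def uniM (t : ZOneOver p) : Matrix.SpecialLinearGroup (Fin 2) (ZOneOver p) :=
  ⟨!![1, t; 0, 1], by simp [Matrix.det_fin_two_of]⟩

lemma uniM_mul (s t : ZOneOver p) : uniM s * uniM t = uniM (s + t) := by
  apply Subtype.ext
  show (!![1, s; 0, 1] : Matrix (Fin 2) (Fin 2) (ZOneOver p)) * !![1, t; 0, 1] = !![1, s + t; 0, 1]
  rw [Matrix.mul_fin_two]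
  congr 1 <;> ring

lemma uniM_zero : uniM (0 : ZOneOver p) = 1 := by
  apply Subtype.ext
  show (!![1, 0; 0, 1] : Matrix (Fin 2) (Fin 2) (ZOneOver p)) = 1
  funext i j
  fin_cases i <;> fin_cases j <;> simp

/-- unipotent hom from the additive group -/
def uniHom (p : ℕ) : Multiplicative (ZOneOver p) →* Matrix.SpecialLinearGroup (Fin 2) (ZOneOver p) where
  toFun t := uniM (Multiplicative.toAdd t)
  map_one' := uniM_zero
  map_mul' s t := (uniM_mul _ _).symm

lemma uniHom_eq (t : Multiplicative (ZOneOver p)) :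
    uniHom p t = uniM (Multiplicative.toAdd t) := rfl

lemma uniHom_pow (t : Multiplicative (ZOneOver p)) (n : ℕ) :
    (uniHom p t) ^ n = uniHom p (t ^ n) := by
  induction n with
  | zero => simp [uniHom]; exact uniM_zero.symm
  | succ m ih => rw [pow_succ, pow_succ, ih, _root_.map_mul]

lemma uniM_pow (n : ℕ) (s : ZOneOver p) : (uniM s) ^ n = uniM (n • s) := by
  induction n with
  | zero => rw [pow_zero, zero_smul, uniM_zero]
  | succ m ih => rw [pow_succ, ih, uniM_mul, succ_nsmul]

/-- image in PSL is not of finite order when t ≠ 0 -/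
lemma uni_infinite_order (hp : p.Prime) (t : ZOneOver p) (ht : t ≠ 0) :
    ¬ IsOfFinOrder ((QuotientGroup.mk' (Subgroup.center
      (Matrix.SpecialLinearGroup (Fin 2) (ZOneOver p)))) (uniM t)) := by
  rw [isOfFinOrder_iff_pow_eq_one]
  rintro ⟨n, hn, hpow⟩
  rw [← _root_.map_pow, QuotientGroup.mk'_apply, QuotientGroup.eq_one_iff,
    uniM_pow] at hpow
  obtain ⟨r, hr, hrs⟩ := Matrix.SpecialLinearGroup.mem_center_iff.mp hpow
  have hentry := congrFun (congrFun hrs 0) 1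
  have h0 : ((Matrix.scalar (Fin 2)) r) 0 1 = 0 := by
    simp [Matrix.scalar, Matrix.diagonal_apply_ne]
  rw [h0] at hentry
  have : ((n • t : ZOneOver p) : ℚ) = 0 := by
    have : ((uniM (n • t) : Matrix (Fin 2) (Fin 2) (ZOneOver p)) 0 1) = n • t := rfl
    rw [this] at hentry
    exact_mod_cast congrArg (Subtype.val) hentry.symm
  rw [nsmul_eq_mul] at this
  push_cast at this
  rcases mul_eq_zero.mp this with h | h
  · exact absurd h (Nat.cast_ne_zero (R := ℚ).mpr hn.ne')
  · exact ht (by exact_mod_cast Subtype.ext h)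
end uni


/-- For primes `p` and `q`, the groups `PSL₂(ℤ[1/p])` and `PSL₂(ℤ[1/q])`
are abstractly commensurable if and only if `p = q`. -/
theorem psl2_abstractlyCommensurable_iff (p q : ℕ) (hp : p.Prime) (hq : q.Prime) :
    AbstractlyCommensurable (PSLZ p) (PSLZ q) ↔ p = q := by
  constructor
  · rintro ⟨G', H', hGfi, hHfi, ⟨e⟩⟩
    by_contra hne
    -- source-side construction
    haveI := hGfi
    set πp : Matrix.SpecialLinearGroup (Fin 2) (ZOneOver p) →* PSLZ p :=
      QuotientGroup.mk' _ with hπp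
    set uh : Multiplicative (ZOneOver p) →* PSLZ p := πp.comp (uniHom p) with huh
    set S : Subgroup (Multiplicative (ZOneOver p)) := G'.comap uh with hS
    have hm : S.index ≠ 0 := by
      rw [hS, Subgroup.index_comap]
      exact @Subgroup.FiniteIndex.index_ne_zero _ _ (G'.subgroupOf uh.range)
        (Subgroup.instFiniteIndex_subgroupOf _ _)
    set m := S.index with hmdef
    have hmem : ∀ t : Multiplicative (ZOneOver p), uh t ^ m ∈ G' := by
      intro t
      have := S.pow_index_mem t
      rw [hS, Subgroup.mem_comap] at this
      rwa [_root_.map_pow] at this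
    have hppos : (0:ℚ) < (p:ℚ) := by exact_mod_cast hp.pos
    -- the element p⁻¹ of ZOneOver p
    set pinv : ZOneOver p := ⟨((p:ℚ))⁻¹, Subring.subset_closure (Set.mem_singleton _)⟩ with hpinv
    have hroot_id : ∀ n : ℕ, (p ^ n) • (pinv ^ n) = (1 : ZOneOver p) := by
      intro n
      have hc : ((pinv : ℚ)) = (p:ℚ)⁻¹ := rfl
      apply Subtype.ext
      show ((((p ^ n) • (pinv ^ n) : ZOneOver p)) : ℚ) = ((1 : ZOneOver p) : ℚ)
      rw [nsmul_eq_mul]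
      push_cast [hc]
      rw [← mul_pow, mul_inv_cancel₀ hppos.ne', one_pow]
    -- the divisible element and its roots, inside G'
    have hx : uh (Multiplicative.ofAdd 1) ^ m ∈ G' := hmem _
    have hy : ∀ n : ℕ, uh (Multiplicative.ofAdd (pinv ^ n)) ^ m ∈ G' := fun n => hmem _
    set ξ : G' := ⟨uh (Multiplicative.ofAdd 1) ^ m, hx⟩ with hξ
    have hroots : ∀ n : ℕ, ∃ η : G', η ^ p ^ n = ξ := by
      intro n
      refine ⟨⟨uh (Multiplicative.ofAdd (pinv ^ n)) ^ m, hy n⟩, ?_⟩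
      apply Subtype.ext
      show (uh (Multiplicative.ofAdd (pinv ^ n)) ^ m) ^ p ^ n = uh (Multiplicative.ofAdd 1) ^ m
      rw [← pow_mul, mul_comm m (p ^ n), pow_mul, ← _root_.map_pow]
      congr 2
      show Multiplicative.ofAdd (pinv ^ n) ^ p ^ n = Multiplicative.ofAdd (1 : ZOneOver p)
      rw [← hroot_id n]
      rfl
    -- ξ has infinite order
    have hxord : ¬ IsOfFinOrder ξ := by
      intro hfin
      have h1 : IsOfFinOrder (uh (Multiplicative.ofAdd 1) ^ m) :=
        (Function.Injective.isOfFinOrder_iff (f := G'.subtype)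
          Subtype.coe_injective).mpr hfin
      have h2 : uh (Multiplicative.ofAdd 1) ^ m = πp (uniM ((m : ℕ) • (1 : ZOneOver p))) := by
        rw [huh, MonoidHom.comp_apply, uniHom_eq, ← _root_.map_pow]
        congr 1
        have h3 : (uniM (Multiplicative.toAdd (Multiplicative.ofAdd (1:ZOneOver p)))) = uniM 1 := rfl
        rw [h3, uniM_pow]
      rw [h2] at h1
      refine uni_infinite_order hp ((m : ℕ) • (1 : ZOneOver p)) ?_ h1
      intro h0
      apply hm
      have h5 : ((m • (1:ZOneOver p) : ZOneOver p) : ℚ) = ((0 : ZOneOver p) : ℚ) :=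
        congrArg Subtype.val h0
      rw [nsmul_eq_mul] at h5
      push_cast at h5
      simpa using h5
    -- transport to H' and PSLZ q
    set xh : PSLZ q := ((e ξ : H') : PSLZ q) with hxh
    have hxhord : ¬ IsOfFinOrder xh := by
      intro hfin
      apply hxord
      have h6 : IsOfFinOrder (e ξ) :=
        (Function.Injective.isOfFinOrder_iff (f := H'.subtype)
          Subtype.coe_injective).mp hfin
      exact (Function.Injective.isOfFinOrder_iff (f := e.toMonoidHom)
        e.injective).mp h6
    have hxhroots : ∀ n : ℕ, ∃ y : PSLZ q, y ^ p ^ n = xh := by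
      intro n
      obtain ⟨η, hη⟩ := hroots n
      refine ⟨((e η : H') : PSLZ q), ?_⟩
      rw [hxh, ← hη, ← SubgroupClass.coe_pow, ← _root_.map_pow]
    exact hxhord (finOrder_of_divisible p q hp hq hne xh hxhroots)
  · rintro rfl
    exact ⟨⊤, ⊤, inferInstance, inferInstance, ⟨MulEquiv.refl _⟩⟩
end

section
/- Let p be a prime, let Λ ≤ PGL₂(ℚ) be the image of SL₂(ℤ[1/p]) in PGL₂(ℚ), and let S be a finite generating set of Λ with word metric d_S. If g ∈ PGL₂(ℚ) and C ≥ 0 are such that d_S(x, g·x·g⁻¹) ≤ C for every x in the subgroup Λ ∩ g⁻¹Λg, then g is the identity element of PGL₂(ℚ). (The natural map from the commensurator group to the quasi-isometry group of PSL₂(ℤ[1/p]) is injective.) -/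
/-- `PGL₂(ℚ)`: the quotient of `GL₂(ℚ)` by its center. -/
abbrev PGL2Q : Type :=
  Matrix.GeneralLinearGroup (Fin 2) ℚ ⧸ Subgroup.center (Matrix.GeneralLinearGroup (Fin 2) ℚ)

/-- The composite homomorphism `SL₂(ℤ[1/p]) → SL₂(ℚ) → GL₂(ℚ) → PGL₂(ℚ)`. -/
noncomputable def toPGL2Q (p : ℕ) :
    Matrix.SpecialLinearGroup (Fin 2) (ZOneOver p) →* PGL2Q :=
  (QuotientGroup.mk' (Subgroup.center (Matrix.GeneralLinearGroup (Fin 2) ℚ))).comp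
    (Matrix.SpecialLinearGroup.toGL.comp
      (Matrix.SpecialLinearGroup.map (ZOneOver p).subtype))

/-- `Λ ≤ PGL₂(ℚ)`: the image of `SL₂(ℤ[1/p])` in `PGL₂(ℚ)`, isomorphic to
`PSL₂(ℤ[1/p])`. -/
noncomputable def LambdaP (p : ℕ) : Subgroup PGL2Q := (toPGL2Q p).range

/-- The word metric on a group `G` with respect to a finite set `S`:
`wordDist S g h` is the least `n` such that `g⁻¹ * h` is a product of `n` elements
of `S ∪ S⁻¹`. -/
noncomputable def wordDist {G : Type*} [Group G] (S : Finset G) (g h : G) : ℕ :=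
  sInf {n : ℕ | ∃ l : List G, l.length = n ∧ (∀ x ∈ l, x ∈ S ∨ x⁻¹ ∈ S) ∧ l.prod = g⁻¹ * h}

namespace PSL2Rigidity

open Matrix

abbrev GL2 := Matrix.GeneralLinearGroup (Fin 2) ℚ
abbrev M2 := Matrix (Fin 2) (Fin 2) ℚ

def e1 : M2 := !![0,1;0,0]
def e2 : M2 := !![0,0;1,0]

lemma e1_sq : e1 * e1 = 0 := by
  ext i j; fin_cases i <;> fin_cases j <;> simp [e1, Matrix.mul_apply, Fin.sum_univ_two]

lemma e2_sq : e2 * e2 = 0 := by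
  ext i j; fin_cases i <;> fin_cases j <;> simp [e2, Matrix.mul_apply, Fin.sum_univ_two]

lemma e1_tr : Matrix.trace e1 = 0 := by simp [e1, Matrix.trace_fin_two]

lemma e2_tr : Matrix.trace e2 = 0 := by simp [e2, Matrix.trace_fin_two]

lemma e1_det (t : ℚ) : ((1 : M2) + t • e1).det = 1 := by
  rw [Matrix.det_fin_two]
  simp [e1, Matrix.one_apply]

lemma e2_det (t : ℚ) : ((1 : M2) + t • e2).det = 1 := by
  rw [Matrix.det_fin_two]
  simp [e2, Matrix.one_apply]

lemma e1_int : ∀ i j, ∃ n : ℤ, e1 i j = (n : ℚ) := by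
  intro i j; fin_cases i <;> fin_cases j
  exacts [⟨0, by simp [e1]⟩, ⟨1, by simp [e1]⟩, ⟨0, by simp [e1]⟩, ⟨0, by simp [e1]⟩]

lemma e2_int : ∀ i j, ∃ n : ℤ, e2 i j = (n : ℚ) := by
  intro i j; fin_cases i <;> fin_cases j
  exacts [⟨0, by simp [e2]⟩, ⟨0, by simp [e2]⟩, ⟨1, by simp [e2]⟩, ⟨0, by simp [e2]⟩]

lemma uu_key (e : M2) (he : e * e = 0) (s t : ℚ) :
    (1 + s • e) * (1 + t • e) = 1 + (s + t) • e := by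
  simp [mul_add, add_mul, Matrix.smul_mul, Matrix.mul_smul, smul_smul, he, add_smul]
  abel

/-- The unipotent one-parameter family `t ↦ 1 + t • e` in `GL₂(ℚ)`, for `e` with `e² = 0`. -/
def uu (e : M2) (he : e * e = 0) (t : ℚ) : GL2 :=
  ⟨1 + t • e, 1 + (-t) • e, by rw [uu_key e he]; simp, by rw [uu_key e he]; simp⟩

@[simp] lemma uu_val (e : M2) (he : e * e = 0) (t : ℚ) :
    ((uu e he t : GL2) : M2) = 1 + t • e := rfl

lemma uu_mul_inv (e : M2) (he : e * e = 0) (s t : ℚ) :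
    uu e he s * (uu e he t)⁻¹ = uu e he (s - t) := by
  apply Units.ext
  show (1 + s • e) * (1 + (-t) • e) = _
  rw [uu_key e he]
  simp [sub_eq_add_neg]

lemma mk_mem_lambdaP (p : ℕ) (A : GL2)
    (h : ∀ i j, ∃ n : ℤ, (A : M2) i j = (n : ℚ))
    (hdet : (A : M2).det = 1) :
    (QuotientGroup.mk A : PGL2Q) ∈ LambdaP p := by
  have hmem : ∀ i j, (A : M2) i j ∈ ZOneOver p := fun i j => by
    obtain ⟨n, hn⟩ := h i j
    rw [hn]; exact intCast_mem _ n
  set B0 : Matrix (Fin 2) (Fin 2) (ZOneOver p) := fun i j => ⟨(A : M2) i j, hmem i j⟩ with hB0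
  have hmap : B0.map (ZOneOver p).subtype = (A : M2) := by ext i j; rfl
  have hdetB : B0.det = 1 := by
    apply Subtype.ext
    have h1 : ((ZOneOver p).subtype B0.det) = (B0.map (ZOneOver p).subtype).det :=
      RingHom.map_det _ _
    rw [hmap, hdet] at h1
    exact h1
  refine ⟨⟨B0, hdetB⟩, ?_⟩
  show QuotientGroup.mk' _ (Matrix.SpecialLinearGroup.toGL
    ((Matrix.SpecialLinearGroup.map (ZOneOver p).subtype) ⟨B0, hdetB⟩)) = _
  have : (Matrix.SpecialLinearGroup.toGL
      ((Matrix.SpecialLinearGroup.map (ZOneOver p).subtype) ⟨B0, hdetB⟩)) = A := by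
    apply Units.ext
    show B0.map (ZOneOver p).subtype = (A : M2)
    exact hmap
  rw [this]
  rfl

lemma scalar_of_commutes (A : M2) (h1 : A * e1 = e1 * A) (h2 : A * e2 = e2 * A) :
    A = A 0 0 • 1 := by
  have q1 := congrFun (congrFun h1 0) 1
  have q2 := congrFun (congrFun h1 1) 1
  have q3 := congrFun (congrFun h2 0) 0
  simp [e1, e2, Matrix.mul_apply, Fin.sum_univ_two] at q1 q2 q3
  ext i j
  fin_cases i <;> fin_cases j <;> simp [Matrix.one_apply, q1, q2, q3]

lemma commute_clears (G : GL2) (e : M2) (he : e * e = 0) (htr : Matrix.trace e = 0)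
    {t : ℚ} (ht : t ≠ 0)
    (hcm : (QuotientGroup.mk (uu e he t) : PGL2Q) * QuotientGroup.mk G
         = QuotientGroup.mk G * QuotientGroup.mk (uu e he t)) :
    (G : M2) * e = e * (G : M2) := by
  set u := uu e he t with hu
  have hz : (u * G)⁻¹ * (G * u) ∈ Subgroup.center GL2 := by
    apply QuotientGroup.eq.mp
    rw [QuotientGroup.mk_mul, QuotientGroup.mk_mul]
    exact hcm
  set z := (u * G)⁻¹ * (G * u) with hzdef
  have hzc : ∀ (e' : M2) (he' : e' * e' = 0), (z : M2) * e' = e' * (z : M2) := by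
    intro e' he'
    have hcomm := Subgroup.mem_center_iff.mp hz (uu e' he' 1)
    have hval := congrArg Units.val hcomm
    simp only [Units.val_mul, uu_val, one_smul] at hval
    have : (z : M2) + e' * (z : M2) = (z : M2) + (z : M2) * e' := by
      calc (z : M2) + e' * (z : M2) = (1 + e') * (z : M2) := by rw [add_mul, one_mul]
        _ = (z : M2) * (1 + e') := hval
        _ = (z : M2) + (z : M2) * e' := by rw [mul_add, mul_one]
    exact (add_left_cancel this).symm
  have hzs : (z : M2) = (z : M2) 0 0 • 1 :=
    scalar_of_commutes _ (hzc e1 e1_sq) (hzc e2 e2_sq)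
  set c := (z : M2) 0 0 with hc
  have hGz : G * u = u * G * z := by rw [hzdef]; group
  have hmat : (G : M2) * (u : M2) = c • ((u : M2) * (G : M2)) := by
    have := congrArg Units.val hGz
    rw [Units.val_mul, Units.val_mul, Units.val_mul, hzs] at this
    rw [this, Matrix.mul_smul, mul_one]
  have hinv : (G : M2) * ((G⁻¹ : GL2) : M2) = 1 := by
    rw [← Units.val_mul, mul_inv_cancel, Units.val_one]
  have hinv' : ((G⁻¹ : GL2) : M2) * (G : M2) = 1 := by
    rw [← Units.val_mul, inv_mul_cancel, Units.val_one]
  have hconj : (G : M2) * (u : M2) * ((G⁻¹ : GL2) : M2) = c • (u : M2) := by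
    rw [hmat, Matrix.smul_mul, mul_assoc, hinv, mul_one]
  have htru : Matrix.trace (u : M2) = 2 := by
    rw [uu_val, Matrix.trace_add, Matrix.trace_smul, htr, Matrix.trace_one]
    simp
  have htr1 : Matrix.trace ((G : M2) * (u : M2) * ((G⁻¹ : GL2) : M2)) = 2 := by
    rw [Matrix.trace_mul_comm, ← mul_assoc, hinv', one_mul, htru]
  have hc1 : c = 1 := by
    rw [hconj, Matrix.trace_smul, htru, smul_eq_mul] at htr1
    linarith
  have hz1 : z = 1 := by
    apply Units.ext
    rw [hzs, hc1, one_smul, Units.val_one]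
  have hGu : G * u = u * G := by rw [hGz, hz1, mul_one]
  have hGum : (G : M2) * (1 + t • e) = (1 + t • e) * (G : M2) := by
    have := congrArg Units.val hGu
    rw [Units.val_mul, Units.val_mul, uu_val] at this
    exact this
  have : t • ((G : M2) * e) = t • (e * (G : M2)) := by
    have h' : (G : M2) + t • ((G : M2) * e) = (G : M2) + t • (e * (G : M2)) := by
      calc (G : M2) + t • ((G : M2) * e) = (G : M2) * (1 + t • e) := by
            rw [mul_add, mul_one, Matrix.mul_smul]
        _ = (1 + t • e) * (G : M2) := hGum
        _ = (G : M2) + t • (e * (G : M2)) := by rw [add_mul, one_mul, Matrix.smul_mul]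
    exact add_left_cancel h'
  exact smul_right_injective M2 ht this

lemma exists_list_of_wordDist_le {G : Type*} [Group G] (S : Finset G)
    (hS : Subgroup.closure (S : Set G) = ⊤) (a b : G) (N : ℕ) (h : wordDist S a b ≤ N) :
    ∃ l : List G, l.length ≤ N ∧ (∀ x ∈ l, x ∈ S ∨ x⁻¹ ∈ S) ∧ l.prod = a⁻¹ * b := by
  have hmem : a⁻¹ * b ∈ Submonoid.closure ((S : Set G) ∪ (S : Set G)⁻¹) := by
    rw [← Subgroup.closure_toSubmonoid, hS]
    trivial
  obtain ⟨l, hl1, hl2⟩ := Submonoid.exists_list_of_mem_closure hmem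
  have hne : {n : ℕ | ∃ l : List G, l.length = n ∧ (∀ x ∈ l, x ∈ S ∨ x⁻¹ ∈ S) ∧
      l.prod = a⁻¹ * b}.Nonempty := by
    refine ⟨l.length, l, rfl, fun x hx => ?_, hl2⟩
    rcases hl1 x hx with h' | h'
    · exact Or.inl h'
    · exact Or.inr (Set.mem_inv.mp h')
  obtain ⟨l', hlen, hcond, hprod⟩ := Nat.sInf_mem hne
  exact ⟨l', hlen ▸ h, hcond, hprod⟩

def ballSet {G : Type*} [Group G] (T : Set G) : ℕ → Set G
  | 0 => {1}
  | (N + 1) => ballSet T N ∪ Set.image2 (· * ·) T (ballSet T N)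

lemma ballSet_finite {G : Type*} [Group G] {T : Set G} (hT : T.Finite) :
    ∀ N, (ballSet T N).Finite
  | 0 => Set.finite_singleton 1
  | (N + 1) => (ballSet_finite hT N).union (Set.Finite.image2 _ hT (ballSet_finite hT N))

lemma one_mem_ballSet {G : Type*} [Group G] (T : Set G) : ∀ N, (1 : G) ∈ ballSet T N
  | 0 => rfl
  | (N + 1) => Or.inl (one_mem_ballSet T N)

lemma prod_mem_ballSet {G : Type*} [Group G] {T : Set G} :
    ∀ (N : ℕ) (l : List G), l.length ≤ N → (∀ x ∈ l, x ∈ T) → l.prod ∈ ballSet T N := by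
  intro N
  induction N with
  | zero =>
    intro l hl _
    obtain rfl : l = [] := List.length_eq_zero_iff.mp (Nat.le_zero.mp hl)
    exact rfl
  | succ N ih =>
    intro l hl hT
    cases l with
    | nil => exact one_mem_ballSet T (N + 1)
    | cons x xs =>
      rw [List.prod_cons]
      exact Or.inr ⟨x, hT x (List.mem_cons_self), xs.prod,
        ih xs (Nat.succ_le_succ_iff.mp hl) (fun y hy => hT y (List.mem_cons_of_mem _ hy)), rfl⟩

lemma comm_of_conj_eq {Γ : Type*} [Group Γ] {a b γ : Γ}
    (h : a⁻¹ * (γ * a * γ⁻¹) = b⁻¹ * (γ * b * γ⁻¹)) :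
    (b * a⁻¹) * γ = γ * (b * a⁻¹) := by
  calc (b * a⁻¹) * γ = b * (a⁻¹ * (γ * a * γ⁻¹)) * (γ * a⁻¹) := by group
    _ = b * (b⁻¹ * (γ * b * γ⁻¹)) * (γ * a⁻¹) := by rw [h]
    _ = γ * (b * a⁻¹) := by group

lemma int_of_den_dvd (q : ℚ) (k : ℕ) (h : q.den ∣ k) : ∃ n : ℤ, (k : ℚ) * q = (n : ℚ) := by
  obtain ⟨c, hc⟩ := h
  refine ⟨(c : ℤ) * q.num, ?_⟩
  have h0 : (q.den : ℚ) ≠ 0 := Nat.cast_ne_zero.mpr q.den_nz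
  have hden : q * (q.den : ℚ) = (q.num : ℚ) := (eq_div_iff h0).mp (Rat.num_div_den q).symm
  rw [hc]
  calc ((q.den * c : ℕ) : ℚ) * q = (c : ℚ) * (q * (q.den : ℚ)) := by push_cast; ring
    _ = (c : ℚ) * (q.num : ℚ) := by rw [hden]
    _ = (((c : ℤ) * q.num : ℤ) : ℚ) := by push_cast; ring

lemma exists_commute (p : ℕ)
    (S : Finset (LambdaP p)) (hS : Subgroup.closure (S : Set (LambdaP p)) = ⊤)
    (g : PGL2Q) (C : ℝ)
    (hbd : ∀ (x : PGL2Q) (hx : x ∈ LambdaP p) (hgx : g * x * g⁻¹ ∈ LambdaP p),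
      (wordDist S ⟨x, hx⟩ ⟨g * x * g⁻¹, hgx⟩ : ℝ) ≤ C)
    (e : M2) (he : e * e = 0)
    (hdet : ∀ t : ℚ, ((1 : M2) + t • e).det = 1)
    (he_int : ∀ i j, ∃ n : ℤ, e i j = (n : ℚ)) :
    ∃ t : ℚ, t ≠ 0 ∧ (QuotientGroup.mk (uu e he t) : PGL2Q) * g
      = g * QuotientGroup.mk (uu e he t) := by
  obtain ⟨G, rfl⟩ := QuotientGroup.mk_surjective g
  -- the conjugated generator matrix
  set M : M2 := (G : M2) * e * ((G⁻¹ : GL2) : M2) with hM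
  have hinv : (G : M2) * ((G⁻¹ : GL2) : M2) = 1 := by
    rw [← Units.val_mul, mul_inv_cancel, Units.val_one]
  have hinv' : ((G⁻¹ : GL2) : M2) * (G : M2) = 1 := by
    rw [← Units.val_mul, inv_mul_cancel, Units.val_one]
  have hMconj : ∀ t : ℚ, ((G * uu e he t * G⁻¹ : GL2) : M2) = 1 + t • M := by
    intro t
    rw [Units.val_mul, Units.val_mul, uu_val]
    rw [mul_add, mul_one, Matrix.mul_smul, add_mul, Matrix.smul_mul, hinv, mul_assoc]
    rw [hM, mul_assoc]
  -- common denominator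
  set d : ℕ := (M 0 0).den * (M 0 1).den * ((M 1 0).den * (M 1 1).den) with hd
  have hdpos : 0 < d := by
    apply Nat.mul_pos <;> apply Nat.mul_pos <;> exact (Rat.den_pos _)
  have hddvd : ∀ i j, (M i j).den ∣ d := by
    intro i j
    fin_cases i <;> fin_cases j
    · exact Dvd.dvd.mul_right (dvd_mul_right _ _) _
    · exact Dvd.dvd.mul_right (dvd_mul_left _ _) _
    · exact Dvd.dvd.mul_left (dvd_mul_right _ _) _
    · exact Dvd.dvd.mul_left (dvd_mul_left _ _) _
  -- the family of abelian group elements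
  set τ : ℕ → ℚ := fun m => (d : ℚ) * (m : ℚ) with hτ
  set x : ℕ → PGL2Q := fun m => QuotientGroup.mk (uu e he (τ m)) with hx
  have hxmem : ∀ m, x m ∈ LambdaP p := by
    intro m
    apply mk_mem_lambdaP
    · intro i j
      obtain ⟨n, hn⟩ := he_int i j
      rcases eq_or_ne i j with rfl | hij
      · refine ⟨1 + (d * m) * n, ?_⟩
        rw [uu_val]
        simp [Matrix.one_apply, hn, hτ]
      · refine ⟨(d * m) * n, ?_⟩
        rw [uu_val]
        simp [Matrix.one_apply, hij, hn, hτ]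

    · rw [uu_val]; exact hdet _
  have hgxeq : ∀ m, QuotientGroup.mk G * x m * (QuotientGroup.mk G : PGL2Q)⁻¹
      = QuotientGroup.mk (G * uu e he (τ m) * G⁻¹) := by
    intro m
    rw [QuotientGroup.mk_mul, QuotientGroup.mk_mul]
    rfl
  have hgxmem : ∀ m, (QuotientGroup.mk G : PGL2Q) * x m * (QuotientGroup.mk G : PGL2Q)⁻¹
      ∈ LambdaP p := by
    intro m
    rw [hgxeq m]
    apply mk_mem_lambdaP
    · intro i j
      rw [hMconj]
      obtain ⟨n, hn⟩ := int_of_den_dvd (M i j) d (hddvd i j)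
      rcases eq_or_ne i j with rfl | hij
      · refine ⟨1 + m * n, ?_⟩
        simp [Matrix.one_apply, hτ]
        rw [mul_comm (d : ℚ) (m : ℚ), mul_assoc, hn]
      · refine ⟨m * n, ?_⟩
        simp [Matrix.one_apply, hij, hτ]
        rw [mul_comm (d : ℚ) (m : ℚ), mul_assoc, hn]
    · rw [Units.val_mul, Units.val_mul, Matrix.det_mul, Matrix.det_mul]
      have h1 : ((G : M2)).det * (((G⁻¹ : GL2)) : M2).det = 1 := by
        rw [← Matrix.det_mul, hinv, Matrix.det_one]
      calc (G : M2).det * ((uu e he (τ m) : GL2) : M2).det * (((G⁻¹ : GL2)) : M2).det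
          = ((uu e he (τ m) : GL2) : M2).det * ((G : M2).det * (((G⁻¹ : GL2)) : M2).det) := by
            ring
        _ = ((uu e he (τ m) : GL2) : M2).det := by rw [h1, mul_one]
        _ = 1 := by rw [uu_val]; exact hdet _
  -- pigeonhole
  set N : ℕ := ⌈C⌉₊ with hN
  set T : Set (LambdaP p) := (S : Set (LambdaP p)) ∪ ((S : Set (LambdaP p)))⁻¹ with hT
  have hTfin : T.Finite := (S.finite_toSet).union ((S.finite_toSet).inv)
  set F : ℕ → (LambdaP p) := fun m =>
    (⟨x m, hxmem m⟩ : LambdaP p)⁻¹ *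
      ⟨(QuotientGroup.mk G : PGL2Q) * x m * (QuotientGroup.mk G : PGL2Q)⁻¹, hgxmem m⟩ with hF
  have hFmem : ∀ m, F m ∈ ballSet T N := by
    intro m
    have hb := hbd (x m) (hxmem m) (hgxmem m)
    have hb' : wordDist S ⟨x m, hxmem m⟩
        ⟨(QuotientGroup.mk G : PGL2Q) * x m * (QuotientGroup.mk G : PGL2Q)⁻¹, hgxmem m⟩ ≤ N := by
      have : (wordDist S _ _ : ℝ) ≤ (N : ℝ) := le_trans hb (Nat.le_ceil C)
      exact_mod_cast this
    obtain ⟨l, hlen, hcond, hprod⟩ := exists_list_of_wordDist_le S hS _ _ N hb'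
    rw [hF]
    simp only
    rw [← hprod]
    apply prod_mem_ballSet N l hlen
    intro y hy
    rcases hcond y hy with h' | h'
    · exact Or.inl h'
    · exact Or.inr (Set.mem_inv.mpr h')
  obtain ⟨m, -, m', -, hmm', hFeq⟩ :=
    Set.infinite_univ.exists_ne_map_eq_of_mapsTo
      (fun m _ => hFmem m) (ballSet_finite hTfin N)
  -- extract commutation
  have hval : (x m)⁻¹ * ((QuotientGroup.mk G : PGL2Q) * x m * (QuotientGroup.mk G : PGL2Q)⁻¹)
      = (x m')⁻¹ * ((QuotientGroup.mk G : PGL2Q) * x m' * (QuotientGroup.mk G : PGL2Q)⁻¹) := by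
    have := congrArg (Subtype.val) hFeq
    simpa [hF, mul_assoc] using this
  have hcm := comm_of_conj_eq hval
  -- x m' * (x m)⁻¹ = mk (uu (τ m' - τ m))
  have hxx : x m' * (x m)⁻¹ = (QuotientGroup.mk (uu e he (τ m' - τ m)) : PGL2Q) := by
    rw [hx]
    show QuotientGroup.mk _ * (QuotientGroup.mk _ : PGL2Q)⁻¹ = _
    rw [← QuotientGroup.mk_inv, ← QuotientGroup.mk_mul, uu_mul_inv]
  refine ⟨τ m' - τ m, ?_, ?_⟩
  · intro hcon
    apply hmm'
    have hd0 : (d : ℚ) ≠ 0 := by exact_mod_cast hdpos.ne'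
    have hττ : τ m' = τ m := sub_eq_zero.mp hcon
    have h1' : (d : ℚ) * (m' : ℚ) = (d : ℚ) * (m : ℚ) := by
      have e1 : τ m' = (d : ℚ) * (m' : ℚ) := by rw [hτ]
      have e2 : τ m = (d : ℚ) * (m : ℚ) := by rw [hτ]
      rw [← e1, ← e2, hττ]
    have h2' : (m' : ℚ) = (m : ℚ) := mul_left_cancel₀ hd0 h1'
    exact_mod_cast h2'.symm
  · rw [← hxx]
    exact hcm

end PSL2Rigidity

open PSL2Rigidity in
/-- If `g ∈ PGL₂(ℚ)` and `C ≥ 0` are such that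
`d_S(x, g x g⁻¹) ≤ C` for every `x ∈ Λ ∩ g⁻¹Λg`, then `g = 1`: the natural map from
the commensurator group to the quasi-isometry group of `PSL₂(ℤ[1/p])` is injective. -/
theorem psl2_commensurator_to_qi_injective (p : ℕ) (hp : p.Prime)
    (S : Finset (LambdaP p)) (hS : Subgroup.closure (S : Set (LambdaP p)) = ⊤)
    (g : PGL2Q) (C : ℝ) (hC : 0 ≤ C)
    (hbd : ∀ (x : PGL2Q) (hx : x ∈ LambdaP p) (hgx : g * x * g⁻¹ ∈ LambdaP p),
      (wordDist S ⟨x, hx⟩ ⟨g * x * g⁻¹, hgx⟩ : ℝ) ≤ C) :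
    g = 1 := by
  obtain ⟨t1, ht1, hcm1⟩ := exists_commute p S hS g C hbd e1 e1_sq e1_det e1_int
  obtain ⟨t2, ht2, hcm2⟩ := exists_commute p S hS g C hbd e2 e2_sq e2_det e2_int
  obtain ⟨G, rfl⟩ := QuotientGroup.mk_surjective g
  have h1 : (G : M2) * e1 = e1 * (G : M2) := commute_clears G e1 e1_sq e1_tr ht1 hcm1
  have h2 : (G : M2) * e2 = e2 * (G : M2) := commute_clears G e2 e2_sq e2_tr ht2 hcm2
  have hsc : (G : M2) = (G : M2) 0 0 • 1 := scalar_of_commutes _ h1 h2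
  rw [QuotientGroup.eq_one_iff]
  rw [Subgroup.mem_center_iff]
  intro h
  apply Units.ext
  rw [Units.val_mul, Units.val_mul, hsc, Matrix.mul_smul, Matrix.smul_mul, mul_one, one_mul]
end

section
/- Let p be a prime and let Λ ≤ GL₂(ℚ) be the subgroup consisting of determinant-1 matrices all of whose entries lie in ℤ[1/p] (the image of SL₂(ℤ[1/p]) in GL₂(ℚ)). Then for every a ∈ GL₂(ℚ), the conjugate subgroup aΛa⁻¹ is commensurable with Λ: aΛa⁻¹ ∩ Λ has finite index in both aΛa⁻¹ and Λ. -/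
lemma ZOneOver.div_pow_mem (p : ℕ) (a : ℤ) (k : ℕ) :
    (a : ℚ) / (p:ℚ) ^ k ∈ ZOneOver p := by
  have h1 : ((p:ℚ))⁻¹ ∈ ZOneOver p := Subring.subset_closure rfl
  have : (a : ℚ) / (p:ℚ)^k = (a:ℚ) * ((p:ℚ)⁻¹)^k := by
    rw [div_eq_mul_inv, inv_pow]
  rw [this]
  exact Subring.mul_mem _ (intCast_mem _ a) (Subring.pow_mem _ h1 k)

lemma ZOneOver.exists_rep (p : ℕ) (hp : p.Prime) {x : ℚ} (hx : x ∈ ZOneOver p) :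
    ∃ (a : ℤ) (k : ℕ), x = (a:ℚ) / (p:ℚ)^k := by
  have hpQ : (p:ℚ) ≠ 0 := by exact_mod_cast hp.ne_zero
  induction hx using Subring.closure_induction with
  | mem x h =>
      rcases h with rfl
      exact ⟨1, 1, by simp⟩
  | one => exact ⟨1, 0, by simp⟩
  | zero => exact ⟨0, 0, by simp⟩
  | add x y _ _ hx hy =>
      obtain ⟨a, k, rfl⟩ := hx
      obtain ⟨b, l, rfl⟩ := hy
      exact ⟨a * p^l + b * p^k, k + l, by push_cast; field_simp; ring⟩
  | neg x _ hx =>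
      obtain ⟨a, k, rfl⟩ := hx
      exact ⟨-a, k, by push_cast; ring⟩
  | mul x y _ _ hx hy =>
      obtain ⟨a, k, rfl⟩ := hx
      obtain ⟨b, l, rfl⟩ := hy
      exact ⟨a * b, k + l, by push_cast; field_simp; ring⟩

lemma ZOneOver.isLocalization (p : ℕ) (hp : p.Prime) :
    IsLocalization.Away ((p : ℤ)) (ZOneOver p) := by
  have hpQ : (p:ℚ) ≠ 0 := by exact_mod_cast hp.ne_zero
  have hinv : ((p:ℚ))⁻¹ ∈ ZOneOver p := Subring.subset_closure rfl
  constructor; constructor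
  · rintro ⟨y, n, rfl⟩
    refine IsUnit.of_mul_eq_one ⟨((p:ℚ)⁻¹)^n, Subring.pow_mem _ hinv n⟩ ?_
    apply Subtype.ext
    push_cast
    field_simp
    rw [← mul_pow]; simp [hpQ]
  · rintro ⟨x, hx⟩
    obtain ⟨a, k, hak⟩ := ZOneOver.exists_rep p hp hx
    refine ⟨⟨a, ⟨(p:ℤ)^k, k, rfl⟩⟩, ?_⟩
    apply Subtype.ext
    push_cast
    rw [hak]
    field_simp
    simp
  · intro a b h
    refine ⟨1, ?_⟩
    have h2 : ((a : ℤ) : ℚ) = ((b : ℤ) : ℚ) := by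
      have := congrArg (fun x : ZOneOver p => (x : ℚ)) h
      simpa using this
    have : a = b := by exact_mod_cast h2
    simp [this]

/-- if the prime-to-p part of the denominator of `q` divides `n`, then `n*q ∈ ℤ[1/p]`. -/
lemma ZOneOver.mul_den_mem (p : ℕ) (hp : p.Prime) (q : ℚ) {n : ℕ}
    (h : ordCompl[p] q.den ∣ n) : (n:ℚ) * q ∈ ZOneOver p := by
  obtain ⟨m, hm⟩ := h
  set v := q.den.factorization p with hv
  set c := ordCompl[p] q.den with hc
  have hden : q.den ≠ 0 := q.den_nz
  have hcpos : 0 < c := Nat.ordCompl_pos p hden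
  have hc0 : (c:ℚ) ≠ 0 := Nat.cast_ne_zero.mpr hcpos.ne'
  have hpQ : (p:ℚ) ≠ 0 := by exact_mod_cast hp.ne_zero
  have hfacN : p ^ v * c = q.den := Nat.ordProj_mul_ordCompl_eq_self q.den p
  have hfac : ((p:ℚ))^v * (c:ℚ) = (q.den:ℚ) := by exact_mod_cast congrArg (Nat.cast (R := ℚ)) hfacN
  have hqden : q * (q.den : ℚ) = (q.num : ℚ) := by
    rw [mul_comm]
    rw [Rat.den_mul_eq_num]
  have hkey : (c:ℚ) * q = (q.num:ℚ) / (p:ℚ)^v := by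
    rw [eq_div_iff (pow_ne_zero v hpQ)]
    calc (c:ℚ) * q * (p:ℚ)^v = q * ((p:ℚ)^v * (c:ℚ)) := by ring
      _ = q * (q.den:ℚ) := by rw [hfac]
      _ = (q.num:ℚ) := hqden
  have h2 : (n:ℚ) = (c:ℚ) * (m:ℚ) := by exact_mod_cast congrArg (Nat.cast (R := ℚ)) hm
  have h3 : (n:ℚ) * q = (m:ℚ) * ((c:ℚ) * q) := by rw [h2]; ring
  rw [h3, hkey]
  exact Subring.mul_mem _ (natCast_mem _ m) (ZOneOver.div_pow_mem p q.num v)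

/-- the reduction map `ℤ[1/p] → ZMod M` for `M` coprime to `p`. -/
noncomputable def ZOneOver.red (p : ℕ) (hp : p.Prime) (M : ℕ) [NeZero M]
    (hM : Nat.Coprime p M) : (ZOneOver p) →+* ZMod M :=
  letI := ZOneOver.isLocalization p hp
  IsLocalization.Away.lift (S := ZOneOver p) ((p : ℤ))
    (g := Int.castRingHom (ZMod M))
    (by
      have : IsUnit ((p : ZMod M)) := (ZMod.isUnit_iff_coprime p M).mpr hM
      simpa using this)

lemma ZOneOver.red_intCast (p : ℕ) (hp : p.Prime) (M : ℕ) [NeZero M]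
    (hM : Nat.Coprime p M) (a : ℤ) :
    ZOneOver.red p hp M hM ⟨(a : ℚ), by simpa using ZOneOver.div_pow_mem p a 0⟩
      = (a : ZMod M) := by
  letI := ZOneOver.isLocalization p hp
  have : (⟨(a : ℚ), by simpa using ZOneOver.div_pow_mem p a 0⟩ : ZOneOver p)
      = algebraMap ℤ (ZOneOver p) a := by
    apply Subtype.ext
    push_cast
    simp
  rw [this]
  exact IsLocalization.Away.lift_eq _ _ _

/-- elements of the kernel of reduction are divisible by `M` in `ℤ[1/p]`. -/
lemma ZOneOver.red_eq_zero (p : ℕ) (hp : p.Prime) (M : ℕ) [NeZero M]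
    (hM : Nat.Coprime p M) (x : ZOneOver p) (hx : ZOneOver.red p hp M hM x = 0) :
    ∃ y : ℚ, y ∈ ZOneOver p ∧ (x : ℚ) = (M:ℚ) * y := by
  have hpQ : (p:ℚ) ≠ 0 := by exact_mod_cast hp.ne_zero
  obtain ⟨a, k, hak⟩ := ZOneOver.exists_rep p hp x.2
  -- x * p^k = a in ZOneOver p
  have hmul : x * ⟨((p:ℤ)^k : ℤ), by simpa using ZOneOver.div_pow_mem p ((p:ℤ)^k) 0⟩
      = ⟨(a : ℚ), by simpa using ZOneOver.div_pow_mem p a 0⟩ := by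
    apply Subtype.ext
    push_cast
    rw [hak]
    field_simp
  have := congrArg (ZOneOver.red p hp M hM) hmul
  rw [map_mul, hx, zero_mul, ZOneOver.red_intCast] at this
  have hdvd : (M : ℤ) ∣ a := (ZMod.intCast_zmod_eq_zero_iff_dvd a M).mp this.symm
  obtain ⟨c, rfl⟩ := hdvd
  refine ⟨(c : ℚ) / (p:ℚ)^k, ZOneOver.div_pow_mem p c k, ?_⟩
  rw [hak]
  push_cast
  ring

/-- `Λ ≤ GL₂(ℚ)`: the image of `SL₂(ℤ[1/p])` in `GL₂(ℚ)`, i.e. the subgroup of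
determinant-1 matrices all of whose entries lie in `ℤ[1/p]`. -/
noncomputable def LambdaGL (p : ℕ) : Subgroup (Matrix.GeneralLinearGroup (Fin 2) ℚ) :=
  (Matrix.SpecialLinearGroup.toGL.comp
    (Matrix.SpecialLinearGroup.map (ZOneOver p).subtype)).range

noncomputable abbrev iotaSL (p : ℕ) :
    Matrix.SpecialLinearGroup (Fin 2) (ZOneOver p) →* Matrix.GeneralLinearGroup (Fin 2) ℚ :=
  Matrix.SpecialLinearGroup.toGL.comp (Matrix.SpecialLinearGroup.map (ZOneOver p).subtype)

lemma matMulMem (S : Subring ℚ) {P Q : Matrix (Fin 2) (Fin 2) ℚ} (hP : ∀ i j, P i j ∈ S)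
    (hQ : ∀ i j, Q i j ∈ S) (i j : Fin 2) : (P * Q) i j ∈ S := by
  rw [Matrix.mul_apply]
  exact Subring.sum_mem _ fun k _ => S.mul_mem (hP i k) (hQ k j)

lemma matOneMem (S : Subring ℚ) (i j : Fin 2) : (1 : Matrix (Fin 2) (Fin 2) ℚ) i j ∈ S := by
  rw [Matrix.one_apply]
  split
  · exact S.one_mem
  · exact S.zero_mem

lemma iota_inj (p : ℕ) : Function.Injective (iotaSL p) := by
  intro x y h
  have h2 := congrArg (fun u : Matrix.GeneralLinearGroup (Fin 2) ℚ =>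
    (u : Matrix (Fin 2) (Fin 2) ℚ)) h
  apply Subtype.ext
  ext i j
  have h3 := congrFun (congrFun h2 i) j
  exact h3

lemma relindex_map_range {G G' : Type*} [Group G] [Group G'] (f : G →* G')
    (hf : Function.Injective f) (H : Subgroup G) :
    ((H.map f).relIndex f.range) = H.index := by
  have hsub : (H.map f).subgroupOf f.range = H.map f.rangeRestrict := by
    ext x
    simp only [Subgroup.mem_subgroupOf, Subgroup.mem_map, MonoidHom.rangeRestrict,
      Subtype.ext_iff]
    rfl
  rw [Subgroup.relIndex, hsub]
  refine Subgroup.index_map_eq _ f.rangeRestrict_surjective ?_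
  rw [MonoidHom.ker_rangeRestrict, f.ker_eq_bot_iff.mpr hf]
  exact bot_le

set_option maxHeartbeats 1000000 in
set_option synthInstance.maxHeartbeats 200000 in
lemma key_relindex (p : ℕ) (hp : p.Prime) (b : Matrix.GeneralLinearGroup (Fin 2) ℚ) :
    (((LambdaGL p).map (MulAut.conj b).toMonoidHom).relIndex (LambdaGL p)) ≠ 0 := by
  classical
  set R := ZOneOver p with hR
  set A : Matrix (Fin 2) (Fin 2) ℚ := (b : Matrix (Fin 2) (Fin 2) ℚ) with hA
  set B : Matrix (Fin 2) (Fin 2) ℚ := ((b⁻¹ : Matrix.GeneralLinearGroup (Fin 2) ℚ) :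
    Matrix (Fin 2) (Fin 2) ℚ) with hB
  have hBA : B * A = 1 := by
    have := congrArg Units.val (inv_mul_cancel b)
    exact this
  have hAB : A * B = 1 := by
    have := congrArg Units.val (mul_inv_cancel b)
    exact this
  -- common denominator
  set d : ℕ := (∏ ij : Fin 2 × Fin 2, ordCompl[p] ((A ij.1 ij.2).den)) *
      (∏ ij : Fin 2 × Fin 2, ordCompl[p] ((B ij.1 ij.2).den)) with hd
  have hdpos : 0 < d := by
    apply mul_pos <;>
      exact Finset.prod_pos fun ij _ => Nat.ordCompl_pos p (Rat.den_nz _)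
  have hAd : ∀ i j, ((d:ℚ)) * A i j ∈ R := by
    intro i j
    refine ZOneOver.mul_den_mem p hp _ ?_
    exact dvd_mul_of_dvd_left (Finset.dvd_prod_of_mem _ (Finset.mem_univ (i, j))) _
  have hBd : ∀ i j, ((d:ℚ)) * B i j ∈ R := by
    intro i j
    refine ZOneOver.mul_den_mem p hp _ ?_
    exact dvd_mul_of_dvd_right (Finset.dvd_prod_of_mem _ (Finset.mem_univ (i, j))) _
  have hnd : ¬ p ∣ d := by
    intro hdvd
    rcases (Nat.Prime.prime hp).dvd_mul.mp hdvd with h | h <;>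
    · obtain ⟨ij, -, hij⟩ := ((Nat.Prime.prime hp).dvd_finset_prod_iff _).mp h
      exact Nat.not_dvd_ordCompl hp (Rat.den_nz _) hij
  -- the modulus
  set M : ℕ := d ^ 2 with hMdef
  haveI : NeZero M := ⟨pow_ne_zero 2 hdpos.ne'⟩
  have hcop : Nat.Coprime p M := ((Nat.Prime.coprime_iff_not_dvd hp).mpr hnd).pow_right 2
  have hMdd : (M : ℚ) = (d:ℚ) * (d:ℚ) := by rw [hMdef]; push_cast; ring
  -- reduction mod M
  set φ : Matrix.SpecialLinearGroup (Fin 2) (ZOneOver p) →*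
      Matrix.SpecialLinearGroup (Fin 2) (ZMod M) :=
    Matrix.SpecialLinearGroup.map (ZOneOver.red p hp M hcop) with hφ
  set Γ : Subgroup (Matrix.GeneralLinearGroup (Fin 2) ℚ) := φ.ker.map (iotaSL p) with hΓ
  -- step 1 : Γ is contained in the conjugate of Λ
  have h1 : Γ ≤ (LambdaGL p).map (MulAut.conj b).toMonoidHom := by
    rintro x ⟨g, hg, rfl⟩
    set G : Matrix (Fin 2) (Fin 2) ℚ :=
      ((g : Matrix (Fin 2) (Fin 2) (ZOneOver p))).map ((ZOneOver p).subtype) with hGdef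
    -- the entries of g are ≡ 1 mod M
    have hker : ∀ i j, (ZOneOver.red p hp M hcop) ((g : Matrix (Fin 2) (Fin 2) (ZOneOver p)) i j)
        = (1 : Matrix (Fin 2) (Fin 2) (ZMod M)) i j := by
      intro i j
      have h1 : φ g = 1 := hg
      have h2 := congrArg (fun u : Matrix.SpecialLinearGroup (Fin 2) (ZMod M) =>
        (u : Matrix (Fin 2) (Fin 2) (ZMod M)) i j) h1
      exact h2
    have hy : ∀ i j, ∃ y : ℚ, y ∈ ZOneOver p ∧
        G i j - (1 : Matrix (Fin 2) (Fin 2) ℚ) i j = (M:ℚ) * y := by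
      intro i j
      have hz : (ZOneOver.red p hp M hcop)
          ((g : Matrix (Fin 2) (Fin 2) (ZOneOver p)) i j
            - (1 : Matrix (Fin 2) (Fin 2) (ZOneOver p)) i j) = 0 := by
        rw [map_sub, hker i j]
        by_cases h : i = j <;> simp [Matrix.one_apply, h]
      obtain ⟨y, hy1, hy2⟩ := ZOneOver.red_eq_zero p hp M hcop _ hz
      refine ⟨y, hy1, ?_⟩
      rw [← hy2]
      push_cast
      by_cases h : i = j <;> simp [Matrix.one_apply, h, hGdef]
    choose Y hY1 hY2 using hy
    set Ym : Matrix (Fin 2) (Fin 2) ℚ := Matrix.of fun i j => Y i j with hYm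
    have hG : G = 1 + ((d:ℚ) * (d:ℚ)) • Ym := by
      ext i j
      have := hY2 i j
      simp only [Matrix.add_apply, Matrix.smul_apply, Matrix.of_apply, smul_eq_mul, hYm]
      rw [← hMdd]
      linarith
    -- the conjugated matrix
    have hh : B * G * A = 1 + ((d:ℚ) • B) * Ym * ((d:ℚ) • A) := by
      rw [hG, Matrix.mul_add, Matrix.mul_one, Matrix.add_mul, hBA]
      simp only [Matrix.smul_mul, Matrix.mul_smul, smul_smul]
    have hmem : ∀ i j, (B * G * A) i j ∈ ZOneOver p := by
      intro i j
      rw [hh]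
      rw [Matrix.add_apply]
      refine Subring.add_mem _ (matOneMem _ i j) ?_
      refine matMulMem _ (matMulMem _ ?_ ?_) ?_ i j
      · intro i j
        simpa [mul_comm] using hBd i j
      · intro i j
        exact hY1 i j
      · intro i j
        simpa [mul_comm] using hAd i j
    have hdetG : G.det = 1 := by
      rw [hGdef]
      have : ((g : Matrix (Fin 2) (Fin 2) (ZOneOver p))).map ((ZOneOver p).subtype)
          = (ZOneOver p).subtype.mapMatrix (g : Matrix (Fin 2) (Fin 2) (ZOneOver p)) := rfl
      rw [this, ← RingHom.map_det, g.prop, map_one]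
    have hdet : (B * G * A).det = 1 := by
      rw [Matrix.det_mul, Matrix.det_mul, hdetG, mul_one, ← Matrix.det_mul, hBA,
        Matrix.det_one]
    set m' : Matrix (Fin 2) (Fin 2) (ZOneOver p) :=
      Matrix.of fun i j => (⟨(B * G * A) i j, hmem i j⟩ : ZOneOver p) with hm'
    have hm'map : m'.map ((ZOneOver p).subtype) = B * G * A := by
      ext i j
      rfl
    have hdet' : m'.det = 1 := by
      have h2 : (ZOneOver p).subtype m'.det = (ZOneOver p).subtype 1 := by
        have : (ZOneOver p).subtype.mapMatrix m' = B * G * A := hm'map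
        rw [RingHom.map_det, this, hdet, map_one]
      exact Subtype.val_injective h2
    set g' : Matrix.SpecialLinearGroup (Fin 2) (ZOneOver p) := ⟨m', hdet'⟩ with hg'
    rw [Subgroup.mem_map]
    refine ⟨iotaSL p g', ⟨g', rfl⟩, ?_⟩
    apply Units.ext
    show A * ((iotaSL p g' : Matrix.GeneralLinearGroup (Fin 2) ℚ) :
      Matrix (Fin 2) (Fin 2) ℚ) * B = _
    have hval : ((iotaSL p g' : Matrix.GeneralLinearGroup (Fin 2) ℚ) :
        Matrix (Fin 2) (Fin 2) ℚ) = B * G * A := by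
      rw [← hm'map]
      rfl
    rw [hval]
    have : A * (B * G * A) * B = (A * B) * G * (A * B) := by
      simp only [Matrix.mul_assoc]
    rw [this, hAB, Matrix.one_mul, Matrix.mul_one]
    rfl
  -- step 2 : Γ has finite index in Λ
  have h2 : Γ.relIndex (LambdaGL p) ≠ 0 := by
    have e : Γ.relIndex (LambdaGL p) = φ.ker.index := by
      have : LambdaGL p = (iotaSL p).range := rfl
      rw [this, hΓ, relindex_map_range _ (iota_inj p)]
    rw [e, Subgroup.index_ker]
    haveI : Finite (Matrix.SpecialLinearGroup (Fin 2) (ZMod M)) := inferInstance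
    haveI : Finite φ.range := inferInstance
    haveI : Nonempty φ.range := ⟨⟨1, ⟨1, map_one φ⟩⟩⟩
    exact Nat.card_pos.ne'
  intro h0
  exact h2 (Subgroup.relIndex_eq_zero_of_le_left h1 h0)

/-- For every `a ∈ GL₂(ℚ)`, the conjugate `aΛa⁻¹` is commensurable with
`Λ = SL₂(ℤ[1/p]) ≤ GL₂(ℚ)`: their intersection has finite index in both. -/
theorem conj_lambda_commensurable (p : ℕ) (hp : p.Prime)
    (a : Matrix.GeneralLinearGroup (Fin 2) ℚ) :
    Subgroup.Commensurable ((LambdaGL p).map (MulAut.conj a).toMonoidHom) (LambdaGL p) := by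
  constructor
  · exact key_relindex p hp a
  · have e2 : (LambdaGL p).comap (MulAut.conj a).toMonoidHom
        = (LambdaGL p).map (MulAut.conj a⁻¹).toMonoidHom := by
      ext x
      rw [Subgroup.mem_comap, Subgroup.mem_map_equiv]
      simp [MulAut.conj, mul_assoc]
    rw [show (LambdaGL p).relIndex ((LambdaGL p).map (MulAut.conj a).toMonoidHom)
        = ((LambdaGL p).comap (MulAut.conj a).toMonoidHom).relIndex (LambdaGL p) from
        (Subgroup.relIndex_comap _ _ _).symm, e2]
    exact key_relindex p hp a⁻¹
end

section
/- Let p be a prime, let G = PGL₂(ℝ) × PGL₂(ℚ_p), and let Γ ≤ G be the image of SL₂(ℤ[1/p]) under the diagonal map M ↦ (M, M). Suppose b ∈ PGL₂(ℚ_p) lies in the image of GL₂(ℚ) under the map GL₂(ℚ) → GL₂(ℚ_p) → PGL₂(ℚ_p), and suppose the element (1, b) ∈ G commensurates Γ, i.e. (1,b)·Γ·(1,b)⁻¹ and Γ are commensurable subgroups of G. Then b = 1. -/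
/-- `PGL₂(ℝ)`: the quotient of `GL₂(ℝ)` by its center. -/
abbrev PGL2R : Type :=
  Matrix.GeneralLinearGroup (Fin 2) ℝ ⧸ Subgroup.center (Matrix.GeneralLinearGroup (Fin 2) ℝ)

/-- `PGL₂(ℚ_p)`: the quotient of `GL₂(ℚ_p)` by its center. -/
abbrev PGL2Qp (p : ℕ) [Fact p.Prime] : Type :=
  Matrix.GeneralLinearGroup (Fin 2) ℚ_[p] ⧸
    Subgroup.center (Matrix.GeneralLinearGroup (Fin 2) ℚ_[p])

/-- The homomorphism `SL₂(ℤ[1/p]) → PGL₂(ℝ)` induced by `ℤ[1/p] ⊂ ℚ ⊂ ℝ`. -/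
noncomputable def slToPGLR (p : ℕ) :
    Matrix.SpecialLinearGroup (Fin 2) (ZOneOver p) →* PGL2R :=
  (QuotientGroup.mk' (Subgroup.center (Matrix.GeneralLinearGroup (Fin 2) ℝ))).comp
    (Matrix.SpecialLinearGroup.toGL.comp
      (Matrix.SpecialLinearGroup.map ((Rat.castHom ℝ).comp (ZOneOver p).subtype)))

/-- The homomorphism `SL₂(ℤ[1/p]) → PGL₂(ℚ_p)` induced by `ℤ[1/p] ⊂ ℚ ⊂ ℚ_p`. -/
noncomputable def slToPGLQp (p : ℕ) [Fact p.Prime] :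
    Matrix.SpecialLinearGroup (Fin 2) (ZOneOver p) →* PGL2Qp p :=
  (QuotientGroup.mk' (Subgroup.center (Matrix.GeneralLinearGroup (Fin 2) ℚ_[p]))).comp
    (Matrix.SpecialLinearGroup.toGL.comp
      (Matrix.SpecialLinearGroup.map ((Rat.castHom ℚ_[p]).comp (ZOneOver p).subtype)))

/-- `Γ`: the image of `SL₂(ℤ[1/p])` in `PGL₂(ℝ) × PGL₂(ℚ_p)` under the diagonal
embedding `M ↦ (M, M)`. -/
noncomputable def GammaP (p : ℕ) [Fact p.Prime] : Subgroup (PGL2R × PGL2Qp p) :=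
  ((slToPGLR p).prod (slToPGLQp p)).range

/-- The homomorphism `GL₂(ℚ) → GL₂(ℚ_p) → PGL₂(ℚ_p)`. -/
noncomputable def glqToPGLQp (p : ℕ) [Fact p.Prime] :
    Matrix.GeneralLinearGroup (Fin 2) ℚ →* PGL2Qp p :=
  (QuotientGroup.mk' (Subgroup.center (Matrix.GeneralLinearGroup (Fin 2) ℚ_[p]))).comp
    (Matrix.GeneralLinearGroup.map (Rat.castHom ℚ_[p]))

section Aux
open Matrix


lemma comm_transvection_scalar {F : Type*} [Field F] (A : Matrix (Fin 2) (Fin 2) F) (x : F)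
    (hx : x ≠ 0)
    (h1 : A * !![1, x; 0, 1] = !![1, x; 0, 1] * A)
    (h2 : A * !![1, 0; x, 1] = !![1, 0; x, 1] * A) :
    ∃ r : F, A = r • (1 : Matrix (Fin 2) (Fin 2) F) := by
  rw [Matrix.eta_fin_two A, Matrix.mul_fin_two, Matrix.mul_fin_two] at h1 h2
  have e00 := congrFun (congrFun h1 0) 0
  have e01 := congrFun (congrFun h1 0) 1
  have f00 := congrFun (congrFun h2 0) 0
  simp at e00 e01 f00
  have hc : A 1 0 = 0 := e00.resolve_left hx
  have hb : A 0 1 = 0 := f00.resolve_right hx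
  have had : A 1 1 = A 0 0 := by
    have : x * A 1 1 = x * A 0 0 := by linear_combination -e01
    exact mul_left_cancel₀ hx this
  refine ⟨A 0 0, ?_⟩
  ext i j
  fin_cases i <;> fin_cases j <;>
    simp [hc, hb, had, Matrix.one_apply]

lemma GL2_mem_center_iff {F : Type*} [Field F] (u : GL (Fin 2) F) :
    u ∈ Subgroup.center (GL (Fin 2) F) ↔
      ∃ r : F, (u : Matrix (Fin 2) (Fin 2) F) = r • (1 : Matrix (Fin 2) (Fin 2) F) := by
  constructor
  · intro hu
    set T1 : GL (Fin 2) F :=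
      ⟨!![1, 1; 0, 1], !![1, -1; 0, 1],
        by norm_num [Matrix.mul_fin_two]; exact Matrix.one_fin_two.symm,
        by norm_num [Matrix.mul_fin_two]; exact Matrix.one_fin_two.symm⟩ with hT1
    set T2 : GL (Fin 2) F :=
      ⟨!![1, 0; 1, 1], !![1, 0; -1, 1],
        by norm_num [Matrix.mul_fin_two]; exact Matrix.one_fin_two.symm,
        by norm_num [Matrix.mul_fin_two]; exact Matrix.one_fin_two.symm⟩ with hT2
    have h1 := congrArg Units.val (Subgroup.mem_center_iff.mp hu T1)
    have h2 := congrArg Units.val (Subgroup.mem_center_iff.mp hu T2)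
    simp only [Units.val_mul, hT1, hT2] at h1 h2
    exact comm_transvection_scalar (u : Matrix (Fin 2) (Fin 2) F) 1 one_ne_zero h1.symm h2.symm
  · rintro ⟨r, hr⟩
    refine Subgroup.mem_center_iff.mpr fun g => ?_
    have : (g : Matrix (Fin 2) (Fin 2) F) * u = (u : Matrix (Fin 2) (Fin 2) F) * g := by
      rw [hr, mul_smul_comm, smul_mul_assoc, mul_one, one_mul]
    exact Units.ext (by simpa [Units.val_mul] using this)

lemma upow {R : Type*} [CommRing R] (k : ℕ) :
    (!![1, (1:R); 0, 1]) ^ k = !![1, (k:R); 0, 1] := by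
  induction k with
  | zero => simp [Matrix.one_fin_two]
  | succ n ih =>
    rw [pow_succ, ih, Matrix.mul_fin_two]
    push_cast
    ring_nf

lemma lpow {R : Type*} [CommRing R] (k : ℕ) :
    (!![1, 0; (1:R), 1]) ^ k = !![1, 0; (k:R), 1] := by
  induction k with
  | zero => simp [Matrix.one_fin_two]
  | succ n ih =>
    rw [pow_succ, ih, Matrix.mul_fin_two]
    push_cast
    ring_nf

/-- If `C * W * z = W * C` with `z` central and `trace W ≠ 0` (over a field),
then `C` and `W` commute. -/
lemma comm_of_center_comm {F : Type*} [Field F] {C W z : GL (Fin 2) F}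
    (hz : z ∈ Subgroup.center (GL (Fin 2) F)) (heq : C * W * z = W * C)
    (htr : Matrix.trace (W : Matrix (Fin 2) (Fin 2) F) ≠ 0) :
    C * W = W * C := by
  obtain ⟨r, hr⟩ := (GL2_mem_center_iff z).mp hz
  have h1 : C * (W * z) * C⁻¹ = W := by
    rw [← mul_assoc]
    exact mul_inv_eq_iff_eq_mul.mpr heq
  have h2 := congrArg (fun u : GL (Fin 2) F => Matrix.trace (u : Matrix (Fin 2) (Fin 2) F)) h1
  simp only [Units.val_mul] at h2
  rw [Matrix.trace_units_conj] at h2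
  rw [hr, mul_smul_comm, mul_one, Matrix.trace_smul, smul_eq_mul] at h2
  have hr1 : r = 1 := by
    have := mul_right_cancel₀ htr (h2.trans (one_mul _).symm)
    simpa using this
  have hz1 : z = 1 := Units.ext (by rw [hr, hr1, one_smul]; rfl)
  rw [hz1, mul_one] at heq
  exact heq

@[simp] lemma toGL_val {n : Type*} [DecidableEq n] [Fintype n] {R : Type*} [CommRing R]
    (A : Matrix.SpecialLinearGroup n R) :
    ((Matrix.SpecialLinearGroup.toGL A : GL n R) : Matrix n n R) = (A : Matrix n n R) := rfl

lemma ker_trans (p : ℕ) [Fact p.Prime] (P : Matrix.SpecialLinearGroup (Fin 2) (ZOneOver p))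
    (h : slToPGLR p P = 1) : slToPGLQp p P = 1 := by
  have h' : (Matrix.SpecialLinearGroup.toGL
      (Matrix.SpecialLinearGroup.map ((Rat.castHom ℝ).comp (ZOneOver p).subtype) P)) ∈
      Subgroup.center (Matrix.GeneralLinearGroup (Fin 2) ℝ) :=
    (QuotientGroup.eq_one_iff _).mp h
  obtain ⟨r, hr⟩ := (GL2_mem_center_iff _).mp h'
  have e01 := congrFun (congrFun hr 0) 1
  have e10 := congrFun (congrFun hr 1) 0
  have e00 := congrFun (congrFun hr 0) 0
  have e11 := congrFun (congrFun hr 1) 1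
  simp [Matrix.one_apply, Matrix.SpecialLinearGroup.map_apply_coe, RingHom.mapMatrix_apply,
    Matrix.map_apply] at e01 e10 e00 e11
  have h11 : ((P : Matrix (Fin 2) (Fin 2) (ZOneOver p)) 1 1) = (P : Matrix (Fin 2) (Fin 2) (ZOneOver p)) 0 0 := by
    exact_mod_cast e11.trans e00.symm
  refine (QuotientGroup.eq_one_iff _).mpr ?_
  refine (GL2_mem_center_iff _).mpr ⟨(((P : Matrix (Fin 2) (Fin 2) (ZOneOver p)) 0 0 : ℚ) : ℚ_[p]), ?_⟩
  ext i j
  fin_cases i <;> fin_cases j <;>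
    simp [Matrix.one_apply, Matrix.SpecialLinearGroup.map_apply_coe, RingHom.mapMatrix_apply,
      Matrix.map_apply, e01, e10, h11]

end Aux

open Matrix in
/-- If `b ∈ PGL₂(ℚ_p)` lies in the image of `GL₂(ℚ)` and the element
`(1, b)` of `PGL₂(ℝ) × PGL₂(ℚ_p)` commensurates the diagonally embedded
`Γ = PSL₂(ℤ[1/p])`, then `b = 1`. -/
theorem id_cross_b_commensurates_gamma (p : ℕ) [Fact p.Prime]
    (b : PGL2Qp p) (hb : b ∈ (glqToPGLQp p).range)
    (hcomm : Subgroup.Commensurable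
      ((GammaP p).map (MulAut.conj ((1 : PGL2R), b)).toMonoidHom) (GammaP p)) :
    b = 1 := by
  obtain ⟨B, hB⟩ := hb
  set Z := Subgroup.center (Matrix.GeneralLinearGroup (Fin 2) ℚ_[p]) with hZ
  set C : Matrix.GeneralLinearGroup (Fin 2) ℚ_[p] :=
    Matrix.GeneralLinearGroup.map (Rat.castHom ℚ_[p]) B with hC
  have hbC : b = QuotientGroup.mk' Z C := hB.symm
  set φ := (slToPGLR p).prod (slToPGLQp p) with hφ
  set K := Subgroup.comap φ ((GammaP p).map (MulAut.conj ((1 : PGL2R), b)).toMonoidHom) with hKdef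
  have hKindex : K.index ≠ 0 := by
    rw [hKdef, Subgroup.index_comap]
    exact hcomm.1
  have hKcomm : ∀ M, M ∈ K → b * slToPGLQp p M = slToPGLQp p M * b := by
    intro M hM
    rw [hKdef, Subgroup.mem_comap] at hM
    obtain ⟨γ, hγ, hconj⟩ := Subgroup.mem_map.mp hM
    obtain ⟨N, rfl⟩ := MonoidHom.mem_range.mp hγ
    have hfst := congrArg Prod.fst hconj
    have hsnd := congrArg Prod.snd hconj
    simp only [MulAut.conj_apply, MonoidHom.coe_coe, MulEquiv.coe_toMonoidHom, hφ,
      MonoidHom.prod_apply, Prod.fst_mul, Prod.snd_mul, Prod.fst_inv, Prod.snd_inv,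
      one_mul, mul_one, inv_one] at hfst hsnd
    have hQ : slToPGLQp p N = slToPGLQp p M := by
      have h1 : slToPGLR p (N * M⁻¹) = 1 := by
        rw [_root_.map_mul, _root_.map_inv, hfst, mul_inv_cancel]
      have h2 := ker_trans p _ h1
      rw [_root_.map_mul, _root_.map_inv, mul_inv_eq_one] at h2
      exact h2
    rw [hQ] at hsnd
    calc b * slToPGLQp p M = (b * slToPGLQp p M * b⁻¹) * b := by group
      _ = slToPGLQp p M * b := by rw [hsnd]
  haveI : K.FiniteIndex := ⟨hKindex⟩
  set n := K.normalCore.index with hn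
  have hn0 : n ≠ 0 := Subgroup.FiniteIndex.index_ne_zero
  have hnQ : ((n : ℚ_[p])) ≠ 0 := Nat.cast_ne_zero.mpr hn0
  set f : (ZOneOver p) →+* ℚ_[p] := (Rat.castHom ℚ_[p]).comp (ZOneOver p).subtype with hf
  have main : ∀ M : Matrix.SpecialLinearGroup (Fin 2) (ZOneOver p), M ∈ K →
      Matrix.trace ((Matrix.SpecialLinearGroup.toGL (Matrix.SpecialLinearGroup.map f M) :
        GL (Fin 2) ℚ_[p]) : Matrix (Fin 2) (Fin 2) ℚ_[p]) ≠ 0 →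
      C * Matrix.SpecialLinearGroup.toGL (Matrix.SpecialLinearGroup.map f M)
        = Matrix.SpecialLinearGroup.toGL (Matrix.SpecialLinearGroup.map f M) * C := by
    intro M hM htr
    have h := hKcomm M hM
    rw [hbC] at h
    have h' : QuotientGroup.mk' Z
        (C * Matrix.SpecialLinearGroup.toGL (Matrix.SpecialLinearGroup.map f M))
        = QuotientGroup.mk' Z
          (Matrix.SpecialLinearGroup.toGL (Matrix.SpecialLinearGroup.map f M) * C) := by
      rw [_root_.map_mul, _root_.map_mul]; exact h
    obtain ⟨z, hz, hzeq⟩ := (QuotientGroup.mk'_eq_mk' Z).mp h'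
    exact comm_of_center_comm hz hzeq htr
  set U : Matrix.SpecialLinearGroup (Fin 2) (ZOneOver p) :=
    ⟨!![1, 1; 0, 1], by simp [Matrix.det_fin_two_of]⟩ with hU
  set L : Matrix.SpecialLinearGroup (Fin 2) (ZOneOver p) :=
    ⟨!![1, 0; 1, 1], by simp [Matrix.det_fin_two_of]⟩ with hL
  have hUK : U ^ n ∈ K := K.normalCore_le (Subgroup.pow_index_mem K.normalCore U)
  have hLK : L ^ n ∈ K := K.normalCore_le (Subgroup.pow_index_mem K.normalCore L)
  have hU1 : ((Matrix.SpecialLinearGroup.toGL (Matrix.SpecialLinearGroup.map f U) :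
      GL (Fin 2) ℚ_[p]) : Matrix (Fin 2) (Fin 2) ℚ_[p]) = !![1, 1; 0, 1] := by
    ext i j
    fin_cases i <;> fin_cases j <;>
      (rw [toGL_val, Matrix.SpecialLinearGroup.map_apply_coe]; simp [hU, hf, RingHom.mapMatrix_apply,
        Matrix.map_apply])
  have hL1 : ((Matrix.SpecialLinearGroup.toGL (Matrix.SpecialLinearGroup.map f L) :
      GL (Fin 2) ℚ_[p]) : Matrix (Fin 2) (Fin 2) ℚ_[p]) = !![1, 0; 1, 1] := by
    ext i j
    fin_cases i <;> fin_cases j <;>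
      (rw [toGL_val, Matrix.SpecialLinearGroup.map_apply_coe]; simp [hL, hf, RingHom.mapMatrix_apply,
        Matrix.map_apply])
  have hUval : ((Matrix.SpecialLinearGroup.toGL (Matrix.SpecialLinearGroup.map f (U ^ n)) :
      GL (Fin 2) ℚ_[p]) : Matrix (Fin 2) (Fin 2) ℚ_[p]) = !![1, (n : ℚ_[p]); 0, 1] := by
    rw [_root_.map_pow, _root_.map_pow, Units.val_pow_eq_pow_val, hU1, upow]
  have hLval : ((Matrix.SpecialLinearGroup.toGL (Matrix.SpecialLinearGroup.map f (L ^ n)) :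
      GL (Fin 2) ℚ_[p]) : Matrix (Fin 2) (Fin 2) ℚ_[p]) = !![1, 0; (n : ℚ_[p]), 1] := by
    rw [_root_.map_pow, _root_.map_pow, Units.val_pow_eq_pow_val, hL1, lpow]
  have commU := main (U ^ n) hUK (by
    rw [hUval]
    simp [Matrix.trace_fin_two_of])
  have commL := main (L ^ n) hLK (by
    rw [hLval]
    simp [Matrix.trace_fin_two_of])
  have hCU : (C : Matrix (Fin 2) (Fin 2) ℚ_[p]) * !![1, (n : ℚ_[p]); 0, 1]
      = !![1, (n : ℚ_[p]); 0, 1] * C := by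
    have := congrArg Units.val commU
    rwa [Units.val_mul, Units.val_mul, hUval] at this
  have hCL : (C : Matrix (Fin 2) (Fin 2) ℚ_[p]) * !![1, 0; (n : ℚ_[p]), 1]
      = !![1, 0; (n : ℚ_[p]), 1] * C := by
    have := congrArg Units.val commL
    rwa [Units.val_mul, Units.val_mul, hLval] at this
  obtain ⟨r, hr⟩ := comm_transvection_scalar (C : Matrix (Fin 2) (Fin 2) ℚ_[p]) (n : ℚ_[p]) hnQ hCU hCL
  have hmem : C ∈ Z := (GL2_mem_center_iff C).mpr ⟨r, hr⟩
  rw [hbC]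
  exact (QuotientGroup.eq_one_iff C).mpr hmem
end

section
/- Let p be a prime and let φ: ℚ → ℚ be a bijection that is K₀-bilipschitz for the real absolute value and for the p-adic absolute value (i.e. K₀⁻¹|x−y| ≤ |φ(x)−φ(y)| ≤ K₀|x−y| and K₀⁻¹|x−y|_p ≤ |φ(x)−φ(y)|_p ≤ K₀|x−y|_p for all x, y ∈ ℚ) and that is quasicompatible with H. Then φ is the restriction of an affine map of ℝ × ℚ_p: there exist α, β ∈ ℚ with α ≠ 0 such that φ(x) = αx + β for all x ∈ ℚ. -/
/-- The diagonal embedding of `ℚ` into `ℝ × ℚ_p`. -/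
noncomputable def diagQ (p : ℕ) [Fact p.Prime] (x : ℚ) : ℝ × ℚ_[p] :=
  ((x : ℝ), (x : ℚ_[p]))

/-- Coordinatewise multiplication by `p^(2n)` on `ℝ × ℚ_p` (the generator of the
group `H`, acting `n` times). -/
noncomputable def scaleH (p : ℕ) [Fact p.Prime] (n : ℤ) (z : ℝ × ℚ_[p]) : ℝ × ℚ_[p] :=
  ((p : ℝ) ^ (2 * n) * z.1, (p : ℚ_[p]) ^ (2 * n) * z.2)

/-- The `H`-invariant diameter `δ(S)`: the infimum over `n ∈ ℤ` of the diameter of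
`p^(2n) · S`, where `ℝ × ℚ_p` carries the sup metric
`d((x₁,y₁),(x₂,y₂)) = max (|x₁−x₂|) (|y₁−y₂|_p)`. -/
noncomputable def deltaH (p : ℕ) [Fact p.Prime] (S : Set (ℝ × ℚ_[p])) : ℝ :=
  ⨅ n : ℤ, Metric.diam (scaleH p n '' S)

/-- A subset `S ⊆ ℚ` has bounded height if `S ⊆ (1/M)·ℤ[1/p]` for some positive
integer `M` coprime to `p`. -/
def BoundedHeight (p : ℕ) (S : Set ℚ) : Prop :=
  ∃ M : ℕ, 0 < M ∧ Nat.Coprime M p ∧ ∀ x ∈ S, (M : ℚ) * x ∈ ZOneOver p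

/-- A map `ψ` with domain `A ⊆ ℚ` is quasi-adapted to `δ` if there is `α : ℕ → ℕ` such
that for every finite `V ⊆ A` (viewed diagonally in `ℝ × ℚ_p`): `δ(V) ≤ k` implies
`δ(ψ(V)) ≤ α(k)` and `δ(ψ(V)) ≤ k` implies `δ(V) ≤ α(k)`. -/
def QuasiAdapted (p : ℕ) [Fact p.Prime] (ψ : ℚ → ℚ) (A : Set ℚ) : Prop :=
  ∃ α : ℕ → ℕ, ∀ V : Finset ℚ, ↑V ⊆ A → ∀ k : ℕ,
    (deltaH p (diagQ p '' ↑V) ≤ (k : ℝ) → deltaH p (diagQ p '' (ψ '' ↑V)) ≤ (α k : ℝ)) ∧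
    (deltaH p (diagQ p '' (ψ '' ↑V)) ≤ (k : ℝ) → deltaH p (diagQ p '' ↑V) ≤ (α k : ℝ))

/-- A bijection `φ : ℚ → ℚ` is quasicompatible with `H` if it is quasi-integral (`φ`
and `φ⁻¹` carry sets of bounded height to sets of bounded height) and the restrictions
of `φ` and `φ⁻¹` to every set of bounded height are quasi-adapted to `δ`. -/
def QuasiCompatible (p : ℕ) [Fact p.Prime] (φ : ℚ → ℚ) : Prop :=
  (∀ A : Set ℚ, BoundedHeight p A → BoundedHeight p (φ '' A)) ∧
  (∀ A : Set ℚ, BoundedHeight p A → BoundedHeight p (φ ⁻¹' A)) ∧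
  (∀ A : Set ℚ, BoundedHeight p A → QuasiAdapted p φ A) ∧
  (∀ A : Set ℚ, BoundedHeight p A → QuasiAdapted p (Function.invFun φ) A)

lemma zoneover_iff {p : ℕ} (hp : p.Prime) (x : ℚ) :
    x ∈ ZOneOver p ↔ ∃ (a : ℤ) (k : ℕ), x = a / (p:ℚ)^k := by
  have hp0 : (p:ℚ) ≠ 0 := Nat.cast_ne_zero.2 hp.ne_zero
  constructor
  · intro hx
    induction hx using Subring.closure_induction with
    | mem x hx =>
        rcases Set.mem_singleton_iff.1 hx with rfl
        exact ⟨1, 1, by simp⟩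
    | zero => exact ⟨0, 0, by simp⟩
    | one => exact ⟨1, 0, by simp⟩
    | add x y hx hy ihx ihy =>
        obtain ⟨a, k, rfl⟩ := ihx; obtain ⟨b, l, rfl⟩ := ihy
        refine ⟨a * p^l + b * p^k, k + l, ?_⟩
        rw [div_add_div _ _ (pow_ne_zero _ hp0) (pow_ne_zero _ hp0),
          div_eq_div_iff (by positivity) (by positivity)]
        push_cast
        ring
    | neg x hx ihx =>
        obtain ⟨a, k, rfl⟩ := ihx
        exact ⟨-a, k, by push_cast; ring⟩
    | mul x y hx hy ihx ihy =>
        obtain ⟨a, k, rfl⟩ := ihx; obtain ⟨b, l, rfl⟩ := ihy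
        refine ⟨a * b, k + l, ?_⟩
        push_cast
        rw [div_mul_div_comm, pow_add]
  · rintro ⟨a, k, rfl⟩
    have h1 : ((p:ℚ))⁻¹ ∈ ZOneOver p := Subring.subset_closure rfl
    have h2 : (a:ℚ) / (p:ℚ)^k = (a:ℚ) * ((p:ℚ)⁻¹)^k := by
      rw [inv_pow]; field_simp
    rw [h2]
    exact mul_mem (intCast_mem _ a) (pow_mem h1 k)

lemma int_norm_lower {p : ℕ} [hp : Fact p.Prime] (a : ℤ) (ha : a ≠ 0) :
    ((p:ℝ) * |(a:ℝ)|)⁻¹ ≤ ‖((a:ℤ) : ℚ_[p])‖ := by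
  have hp1 : 1 < p := hp.out.one_lt
  have hna : a.natAbs ≠ 0 := Int.natAbs_ne_zero.2 ha
  set n : ℕ := Nat.log p a.natAbs + 1 with hn
  have h1 : a.natAbs < p ^ n := Nat.lt_pow_succ_log_self hp1 _
  have h2 : p ^ n ≤ p * a.natAbs := by
    rw [pow_succ, mul_comm]
    exact Nat.mul_le_mul_left _ (Nat.pow_log_le_self p hna)
  have hnd : ¬ ((p:ℤ) ^ n ∣ a) := by
    intro hd
    have hd2 : (p^n : ℕ) ∣ a.natAbs := by
      have h' := Int.natAbs_dvd_natAbs.2 hd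
      rwa [Int.natAbs_pow, Int.natAbs_natCast] at h'
    exact absurd (Nat.le_of_dvd (Nat.pos_of_ne_zero hna) hd2) (not_le.2 h1)
  have h3 : ¬ (‖((a:ℤ) : ℚ_[p])‖ ≤ (p:ℝ) ^ (-(n:ℤ))) := by
    rw [Padic.norm_int_le_pow_iff_dvd]
    exact_mod_cast hnd
  have h4 : (p:ℝ) ^ (-(n:ℤ)) < ‖((a:ℤ) : ℚ_[p])‖ := not_le.1 h3
  refine le_trans ?_ h4.le
  have hp0 : (0:ℝ) < p := by positivity
  have habs : |(a:ℝ)| = (a.natAbs : ℝ) := by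
    simp [Nat.cast_natAbs]
  rw [zpow_neg, zpow_natCast]
  apply inv_anti₀
  · positivity
  · rw [habs]
    calc ((p:ℝ))^n = ((p^n : ℕ) : ℝ) := by push_cast; ring
    _ ≤ ((p * a.natAbs : ℕ) : ℝ) := by exact_mod_cast h2
    _ = (p:ℝ) * (a.natAbs:ℝ) := by push_cast; ring

lemma key_lower {p : ℕ} [hp : Fact p.Prime] {M : ℕ} (hM0 : 0 < M) (hMp : Nat.Coprime M p)
    {d : ℚ} (hd : d ≠ 0) (hmem : (M:ℚ) * d ∈ ZOneOver p) :
    ((p:ℝ) * M)⁻¹ ≤ |(d:ℝ)| * ‖((d:ℚ) : ℚ_[p])‖ := by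
  obtain ⟨a, k, hak⟩ := (zoneover_iff hp.out _).1 hmem
  have hpQ : (0:ℚ) < p := by exact_mod_cast hp.out.pos
  have hMQ : ((M:ℚ)) ≠ 0 := by positivity
  have hpR : (0:ℝ) < p := by exact_mod_cast hp.out.pos
  have hMR : (0:ℝ) < M := by exact_mod_cast hM0
  have ha : a ≠ 0 := by
    rintro rfl
    apply hd
    have h0 : (M:ℚ) * d = 0 := by rw [hak]; simp
    exact (mul_eq_zero.1 h0).resolve_left hMQ
  have hd' : d = (a:ℚ) / ((M:ℚ) * (p:ℚ)^k) := by
    rw [eq_div_iff (by positivity)]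
    field_simp at hak
    linear_combination hak
  have hMnorm : ‖((M:ℕ) : ℚ_[p])‖ = 1 := by
    have hint : ((M:ℕ) : ℚ_[p]) = ((M:ℤ) : ℚ_[p]) := by push_cast; ring
    rw [hint]
    refine le_antisymm (Padic.norm_int_le_one _) ?_
    by_contra hlt
    push_neg at hlt
    have h1 := (Padic.norm_intCast_lt_one_iff (k := (M:ℤ))).1 hlt
    have hpd : p ∣ M := by exact_mod_cast h1
    exact ((Nat.Prime.coprime_iff_not_dvd hp.out).mp hMp.symm) hpd
  have e1 : |(d:ℝ)| = |(a:ℝ)| / ((M:ℝ) * (p:ℝ)^k) := by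
    rw [hd']
    push_cast
    rw [abs_div]
    congr 1
    exact abs_of_pos (mul_pos hMR (pow_pos hpR k))
  have e2 : ‖((d:ℚ) : ℚ_[p])‖ = ‖((a:ℤ) : ℚ_[p])‖ * (p:ℝ)^(k:ℕ) := by
    rw [hd']
    push_cast
    rw [norm_div, norm_mul, Padic.norm_p_pow, hMnorm, one_mul, zpow_neg,
      zpow_natCast]
    field_simp
  have h3 := int_norm_lower (p := p) a ha
  have haR : (0:ℝ) < |(a:ℝ)| := by
    simp only [abs_pos]
    exact_mod_cast ha
  have hlow : ((p:ℝ))⁻¹ ≤ |(a:ℝ)| * ‖((a:ℤ) : ℚ_[p])‖ := by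
    have h4 := mul_le_mul_of_nonneg_left h3 haR.le
    calc ((p:ℝ))⁻¹ = |(a:ℝ)| * ((p:ℝ) * |(a:ℝ)|)⁻¹ := by field_simp
    _ ≤ |(a:ℝ)| * ‖((a:ℤ) : ℚ_[p])‖ := h4
  have heq : |(d:ℝ)| * ‖((d:ℚ) : ℚ_[p])‖ = (|(a:ℝ)| * ‖((a:ℤ) : ℚ_[p])‖) * (M:ℝ)⁻¹ := by
    rw [e1, e2]
    field_simp
  rw [heq, mul_inv]
  exact mul_le_mul_of_nonneg_right hlow (by positivity)

/-- **Action Rigidity.** A bijection `φ : ℚ → ℚ` which is `K₀`-bilipschitz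
for both the real and the `p`-adic absolute values and quasicompatible with `H` is the
restriction of an affine map of `ℝ × ℚ_p`: `φ(x) = αx + β` with `α ≠ 0`. -/
theorem action_rigidity (p : ℕ) [Fact p.Prime] (φ : ℚ → ℚ)
    (hbij : Function.Bijective φ) (K₀ : ℝ) (hK₀ : 1 ≤ K₀)
    (hlipR : ∀ x y : ℚ,
      K₀⁻¹ * |(x : ℝ) - (y : ℝ)| ≤ |(φ x : ℝ) - (φ y : ℝ)| ∧
      |(φ x : ℝ) - (φ y : ℝ)| ≤ K₀ * |(x : ℝ) - (y : ℝ)|)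
    (hlipP : ∀ x y : ℚ,
      K₀⁻¹ * ‖(x : ℚ_[p]) - (y : ℚ_[p])‖ ≤ ‖(φ x : ℚ_[p]) - (φ y : ℚ_[p])‖ ∧
      ‖(φ x : ℚ_[p]) - (φ y : ℚ_[p])‖ ≤ K₀ * ‖(x : ℚ_[p]) - (y : ℚ_[p])‖)
    (hqc : QuasiCompatible p φ) :
    ∃ α β : ℚ, α ≠ 0 ∧ ∀ x : ℚ, φ x = α * x + β := by
  classical
  have hpP : p.Prime := Fact.out
  set P : ℚ := (p:ℚ) with hPdef
  have hP0 : P ≠ 0 := Nat.cast_ne_zero.2 hpP.ne_zero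
  have hpQ : (0:ℚ) < P := by
    rw [hPdef]; exact_mod_cast hpP.pos
  have hpR0 : (0:ℝ) < (p:ℝ) := by exact_mod_cast hpP.pos
  have hpR1 : (1:ℝ) < (p:ℝ) := by exact_mod_cast hpP.one_lt
  have hK0 : (0:ℝ) < K₀ := lt_of_lt_of_le one_pos hK₀
  -- quasi-integrality on ℤ[1/p]
  have hAZ : BoundedHeight p (↑(ZOneOver p) : Set ℚ) :=
    ⟨1, one_pos, Nat.coprime_one_left p, fun x hx => by simpa using hx⟩
  obtain ⟨M, hM0, hMp, hMmem⟩ := hqc.1 _ hAZ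
  have hφZ : ∀ x : ℚ, x ∈ ZOneOver p → (M:ℚ) * φ x ∈ ZOneOver p :=
    fun x hx => hMmem _ ⟨x, hx, rfl⟩
  -- membership helpers
  have hPmem : ∀ e : ℤ, P ^ e ∈ ZOneOver p := by
    intro e
    rcases e with n | n
    · rw [zoneover_iff hpP]
      exact ⟨(p:ℤ)^n, 0, by push_cast; simp [hPdef]⟩
    · rw [zoneover_iff hpP]
      refine ⟨1, n+1, ?_⟩
      rw [zpow_negSucc]
      push_cast
      rw [one_div]
  have zmem : ∀ (b : ℤ) (e : ℤ), (b:ℚ) * P ^ e ∈ ZOneOver p :=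
    fun b e => mul_mem (intCast_mem _ b) (hPmem e)
  -- the increment function
  set g : ℤ → ℚ → ℚ := fun e y => φ (y + P ^ e) - φ y with hg
  -- choose r0
  obtain ⟨r0, hr0⟩ : ∃ n : ℕ, (p:ℝ) * M * ((2*K₀) * (2*K₀)) < (p:ℝ)^n :=
    pow_unbounded_of_one_lt _ hpR1
  -- Step L1 : invariance of increments under p-adically small shifts
  have L1 : ∀ (e : ℤ) (y t : ℚ), y ∈ ZOneOver p → t ∈ ZOneOver p →
      ‖((t:ℚ) : ℚ_[p])‖ ≤ (p:ℝ) ^ (-(e + r0) : ℤ) → g e (y + t) = g e y := by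
    intro e y t hy ht hsmall
    by_contra hne
    set d : ℚ := g e y - g e (y + t) with hd
    have hdne : d ≠ 0 := sub_ne_zero.2 fun h => hne h.symm
    have hdm : (M:ℚ) * d ∈ ZOneOver p := by
      have m1 := hφZ _ (add_mem hy (hPmem e))
      have m2 := hφZ _ hy
      have m3 := hφZ _ (add_mem (add_mem hy ht) (hPmem e))
      have m4 := hφZ _ (add_mem hy ht)
      have hexp : (M:ℚ) * d =
          ((M:ℚ) * φ (y + P^e) - (M:ℚ) * φ y)
            - ((M:ℚ) * φ (y + t + P^e) - (M:ℚ) * φ (y + t)) := by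
        rw [hd]; simp only [hg]; ring
      rw [hexp]
      exact sub_mem (sub_mem m1 m2) (sub_mem m3 m4)
    have hkey := key_lower hM0 hMp hdne hdm
    -- real bound
    have habs : ∀ z : ℚ, |((z + P^e : ℚ):ℝ) - (z:ℝ)| = (p:ℝ)^e := by
      intro z
      push_cast
      rw [add_sub_cancel_left]
      exact abs_of_pos (zpow_pos hpR0 e)
    have hreal : |(d:ℝ)| ≤ (2*K₀) * (p:ℝ)^e := by
      have h1 := (hlipR (y + P^e) y).2
      have h2 := (hlipR (y + t + P^e) (y + t)).2
      rw [habs y] at h1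
      rw [habs (y + t)] at h2
      have hdc : (d:ℝ) = ((φ (y + P^e) : ℝ) - (φ y : ℝ))
          - ((φ (y + t + P^e) : ℝ) - (φ (y + t) : ℝ)) := by
        rw [hd]; simp only [hg]; push_cast; ring
      rw [hdc]
      calc |((φ (y + P^e) : ℝ) - (φ y : ℝ)) - ((φ (y + t + P^e) : ℝ) - (φ (y + t) : ℝ))|
          ≤ |(φ (y + P^e) : ℝ) - (φ y : ℝ)| + |(φ (y + t + P^e) : ℝ) - (φ (y + t) : ℝ)| :=
            abs_sub _ _
      _ ≤ K₀ * (p:ℝ)^e + K₀ * (p:ℝ)^e := add_le_add h1 h2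
      _ = (2*K₀) * (p:ℝ)^e := by ring
    -- p-adic bound
    have hpadic : ‖((d:ℚ) : ℚ_[p])‖ ≤ (2*K₀) * (p:ℝ)^(-(e + r0) : ℤ) := by
      have c1 : ((y + t : ℚ) : ℚ_[p]) - ((y:ℚ) : ℚ_[p]) = ((t:ℚ) : ℚ_[p]) := by
        push_cast; ring
      have c2 : ((y + t + P^e : ℚ) : ℚ_[p]) - ((y + P^e :ℚ) : ℚ_[p]) = ((t:ℚ) : ℚ_[p]) := by
        push_cast; ring
      have h1 := (hlipP (y + t) y).2
      have h2 := (hlipP (y + t + P^e) (y + P^e)).2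
      rw [c1] at h1
      rw [c2] at h2
      have hdc : ((d:ℚ) : ℚ_[p]) =
          ((φ (y + t) : ℚ_[p]) - (φ y : ℚ_[p]))
            - ((φ (y + t + P^e) : ℚ_[p]) - (φ (y + P^e) : ℚ_[p])) := by
        rw [hd]; simp only [hg]; push_cast; ring
      have htK : ‖((t:ℚ) : ℚ_[p])‖ ≤ (p:ℝ) ^ (-(e + r0) : ℤ) := hsmall
      calc ‖((d:ℚ) : ℚ_[p])‖
          ≤ ‖(φ (y + t) : ℚ_[p]) - (φ y : ℚ_[p])‖
            + ‖(φ (y + t + P^e) : ℚ_[p]) - (φ (y + P^e) : ℚ_[p])‖ := by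
              rw [hdc]; exact norm_sub_le _ _
      _ ≤ K₀ * ‖((t:ℚ) : ℚ_[p])‖ + K₀ * ‖((t:ℚ) : ℚ_[p])‖ := add_le_add h1 h2
      _ = (2*K₀) * ‖((t:ℚ) : ℚ_[p])‖ := by ring
      _ ≤ (2*K₀) * (p:ℝ) ^ (-(e + r0) : ℤ) := by
          apply mul_le_mul_of_nonneg_left htK (by positivity)
    -- combine
    have hprod : |(d:ℝ)| * ‖((d:ℚ) : ℚ_[p])‖ ≤ ((2*K₀) * (2*K₀)) * (p:ℝ)^(-(r0:ℤ)) := by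
      calc |(d:ℝ)| * ‖((d:ℚ) : ℚ_[p])‖
          ≤ ((2*K₀) * (p:ℝ)^e) * ((2*K₀) * (p:ℝ)^(-(e + r0) : ℤ)) := by
            apply mul_le_mul hreal hpadic (norm_nonneg _) (by positivity)
      _ = ((2*K₀) * (2*K₀)) * ((p:ℝ)^e * (p:ℝ)^(-(e + r0) : ℤ)) := by ring
      _ = ((2*K₀) * (2*K₀)) * (p:ℝ)^(-(r0:ℤ)) := by
            rw [← zpow_add₀ (ne_of_gt hpR0)]
            congr 1
            ring
    have hlt : ((2*K₀) * (2*K₀)) * (p:ℝ)^(-(r0:ℤ)) < ((p:ℝ) * M)⁻¹ := by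
      rw [zpow_neg, zpow_natCast, ← div_eq_mul_inv, ← one_div,
        div_lt_div_iff₀ (by positivity) (by positivity)]
      nlinarith [hr0]
    exact absurd (lt_of_le_of_lt (hkey.trans hprod) hlt) (lt_irrefl _)
  -- Step Ref : refinement of increments
  have Ref : ∀ (e' e : ℤ), e' ≤ e → ∀ y : ℚ,
      g e y = ∑ j ∈ Finset.range (p ^ (e - e').toNat), g e' (y + (j:ℚ) * P ^ e') := by
    intro e' e hee y
    have hN : ((p ^ (e-e').toNat : ℕ) : ℚ) * P ^ e' = P ^ e := by
      push_cast
      rw [← zpow_natCast P ((e-e').toNat), Int.toNat_of_nonneg (sub_nonneg.2 hee),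
        ← zpow_add₀ hP0, sub_add_cancel]
    calc g e y = φ (y + ((p ^ (e-e').toNat : ℕ):ℚ) * P ^ e') - φ (y + (0:ℚ) * P^e') := by
          rw [hN]; simp only [hg]; rw [zero_mul, add_zero]
    _ = ∑ j ∈ Finset.range (p^(e-e').toNat),
          (φ (y + ((j+1:ℕ):ℚ) * P^e') - φ (y + ((j:ℕ):ℚ)*P^e')) := by
          rw [Finset.sum_range_sub (fun j => φ (y + ((j:ℕ):ℚ) * P ^ e'))]
          norm_num
    _ = ∑ j ∈ Finset.range (p^(e-e').toNat), g e' (y + (j:ℚ)*P^e') := by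
          apply Finset.sum_congr rfl
          intro j _
          simp only [hg]
          congr 2
          push_cast
          ring
  -- Step C : increments are independent of basepoint
  have C : ∀ (e : ℤ) (y : ℚ), y ∈ ZOneOver p → g e y = g e 0 := by
    intro e y hy
    obtain ⟨a, k, rfl⟩ := (zoneover_iff hpP y).1 hy
    set t : ℚ := (a:ℚ) / P^k with htdef
    set e' : ℤ := min e (-(k:ℤ) - r0) with he'
    have hee : e' ≤ e := min_le_left _ _
    have he'2 : e' ≤ -(k:ℤ) - r0 := min_le_right _ _
    have hsmall : ‖((t:ℚ) : ℚ_[p])‖ ≤ (p:ℝ) ^ (-(e' + r0) : ℤ) := by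
      have h1 : ‖((t:ℚ) : ℚ_[p])‖ ≤ (p:ℝ)^(k:ℤ) := by
        rw [htdef, hPdef]
        push_cast
        rw [norm_div, Padic.norm_p_pow]
        have hna := Padic.norm_int_le_one (p := p) a
        have hden : (0:ℝ) < (p:ℝ)^(-(k:ℤ)) := zpow_pos hpR0 _
        calc ‖((a:ℤ):ℚ_[p])‖ / (p:ℝ)^(-(k:ℤ)) ≤ 1 / (p:ℝ)^(-(k:ℤ)) :=
              (div_le_div_iff_of_pos_right hden).2 hna
        _ = (p:ℝ)^(k:ℤ) := by rw [one_div, ← zpow_neg, neg_neg]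
      refine h1.trans (zpow_le_zpow_right₀ (le_of_lt hpR1) ?_)
      omega
    have hmemt : t ∈ ZOneOver p := (zoneover_iff hpP t).2 ⟨a, k, rfl⟩
    rw [Ref e' e hee t, Ref e' e hee 0]
    apply Finset.sum_congr rfl
    intro j _
    have hbase : ((j:ℤ):ℚ) * P ^ e' ∈ ZOneOver p := zmem j e'
    have hbase' : (j:ℚ) * P ^ e' ∈ ZOneOver p := by exact_mod_cast hbase
    have := L1 e' ((j:ℚ) * P^e') t hbase' hmemt hsmall
    rw [add_comm t ((j:ℚ) * P^e')] at *
    rw [zero_add]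
    calc g e' ((j:ℚ) * P^e' + t) = g e' ((j:ℚ) * P^e') := this
    _ = g e' ((j:ℚ) * P^e') := rfl
  -- Step S : value of the increment at scale -k
  have S : ∀ k : ℕ, g (-(k:ℤ)) 0 = (φ 1 - φ 0) / P^k := by
    intro k
    have h0 : g 0 0 = φ 1 - φ 0 := by
      simp only [hg]
      norm_num
    have hee : (-(k:ℤ)) ≤ 0 := by omega
    have href := Ref (-(k:ℤ)) 0 hee 0
    have htn : ((0:ℤ) - (-(k:ℤ))).toNat = k := by omega
    rw [htn] at href
    have hterm : ∀ j ∈ Finset.range (p^k),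
        g (-(k:ℤ)) ((0:ℚ) + (j:ℚ) * P ^ (-(k:ℤ))) = g (-(k:ℤ)) 0 := by
      intro j _
      rw [zero_add]
      have hb : ((j:ℤ):ℚ) * P ^ (-(k:ℤ)) ∈ ZOneOver p := zmem j (-(k:ℤ))
      have hb' : ((j:ℕ):ℚ) * P ^ (-(k:ℤ)) ∈ ZOneOver p := by exact_mod_cast hb
      exact C (-(k:ℤ)) _ hb'
    rw [Finset.sum_congr rfl hterm, Finset.sum_const, Finset.card_range] at href
    rw [h0] at href
    have hcard : ((p^k : ℕ) : ℚ) = P^k := by push_cast; rw [hPdef]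
    rw [eq_div_iff (pow_ne_zero _ hP0), href, nsmul_eq_mul, hcard]
    ring
  -- Step T : φ is affine on ℤ[1/p]
  have T : ∀ (k : ℕ) (b : ℤ), φ ((b:ℚ) / P^k) = φ 0 + (φ 1 - φ 0) * ((b:ℚ)/P^k) := by
    intro k b
    have hstep : ∀ c : ℤ, φ ((c:ℚ)/P^k + P^(-(k:ℤ))) - φ ((c:ℚ)/P^k) = (φ 1 - φ 0)/P^k := by
      intro c
      have hmem : (c:ℚ)/P^k ∈ ZOneOver p := (zoneover_iff hpP _).2 ⟨c, k, by rw [hPdef]⟩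
      calc φ ((c:ℚ)/P^k + P^(-(k:ℤ))) - φ ((c:ℚ)/P^k) = g (-(k:ℤ)) ((c:ℚ)/P^k) := rfl
      _ = g (-(k:ℤ)) 0 := C _ _ hmem
      _ = (φ 1 - φ 0)/P^k := S k
    have harg : ∀ c : ℤ, ((c:ℚ))/P^k + P^(-(k:ℤ)) = ((c+1 : ℤ):ℚ)/P^k := by
      intro c
      rw [zpow_neg, zpow_natCast]
      push_cast
      rw [inv_eq_one_div, ← add_div]
    induction b using Int.induction_on with
    | zero => simp
    | succ b ih =>
        have h1 := hstep b
        rw [harg b] at h1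
        push_cast at h1 ih ⊢
        linear_combination h1 + ih
    | pred b ih =>
        have h1 := hstep (-b-1)
        rw [harg (-b-1)] at h1
        have he : (-b-1+1 : ℤ) = -b := by ring
        rw [he] at h1
        push_cast at h1 ih ⊢
        linear_combination ih - h1
  -- affine on ℤ[1/p]
  have aff : ∀ x : ℚ, x ∈ ZOneOver p → φ x = φ 0 + (φ 1 - φ 0) * x := by
    intro x hx
    obtain ⟨a, k, rfl⟩ := (zoneover_iff hpP x).1 hx
    exact T k a
  -- conclusion
  refine ⟨φ 1 - φ 0, φ 0, ?_, ?_⟩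
  · intro h0
    have h1 := (hlipR 1 0).1
    have hcast : ((φ 1 : ℚ):ℝ) - ((φ 0 : ℚ):ℝ) = ((φ 1 - φ 0 : ℚ) : ℝ) := by push_cast; ring
    rw [hcast, h0] at h1
    norm_num at h1
    have hKinv : (0:ℝ) < K₀⁻¹ := inv_pos.2 hK0
    linarith
  · intro x
    set α : ℚ := φ 1 - φ 0 with hα
    set β : ℚ := φ 0 with hβ
    set r : ℚ := φ x - (α * x + β) with hr
    have hbound : ∀ n : ℕ, |(r:ℝ)| ≤ (K₀ + |(α:ℝ)|) * ((p:ℝ)^n)⁻¹ := by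
      intro n
      set z : ℚ := ((⌊x * P^n⌋ : ℤ) : ℚ) / P^n with hz
      have hzmem : z ∈ ZOneOver p := (zoneover_iff hpP z).2 ⟨⌊x * P^n⌋, n, by rw [hz, hPdef]⟩
      have hPk : (0:ℚ) < P^n := pow_pos hpQ n
      have hxz : |x - z| ≤ (P^n)⁻¹ := by
        have h1 : ((⌊x * P^n⌋ : ℤ):ℚ) ≤ x * P^n := Int.floor_le _
        have h2 : x * P^n < ((⌊x * P^n⌋ : ℤ):ℚ) + 1 := Int.lt_floor_add_one _
        have hzx : z ≤ x := by
          rw [hz, div_le_iff₀ hPk]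
          exact h1
        have hup : x - z ≤ (P^n)⁻¹ := by
          rw [hz, sub_le_iff_le_add, inv_eq_one_div, ← add_div, le_div_iff₀ hPk]
          linarith
        have hinv : (0:ℚ) < (P^n)⁻¹ := inv_pos.2 hPk
        rw [abs_le]
        constructor <;> linarith
      have hφz : φ z = β + α * z := aff z hzmem
      have hrz : (r:ℝ) = (((φ x : ℚ):ℝ) - ((φ z:ℚ):ℝ)) + ((α:ℝ) * (z:ℝ) - (α:ℝ) * (x:ℝ)) := by
        rw [hr, hφz]
        push_cast
        ring
      have hxzR : |(x:ℝ) - (z:ℝ)| ≤ ((p:ℝ)^n)⁻¹ := by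
        have hc : ((x - z : ℚ) : ℝ) = (x:ℝ) - (z:ℝ) := by push_cast; ring
        have hc2 : (((P^n)⁻¹ : ℚ) : ℝ) = ((p:ℝ)^n)⁻¹ := by rw [hPdef]; push_cast; ring
        rw [← hc, ← hc2, ← Rat.cast_abs]
        exact_mod_cast hxz
      calc |(r:ℝ)| ≤ |((φ x : ℚ):ℝ) - ((φ z:ℚ):ℝ)| + |(α:ℝ) * (z:ℝ) - (α:ℝ) * (x:ℝ)| := by
            rw [hrz]; exact abs_add_le _ _
      _ ≤ K₀ * |(x:ℝ) - (z:ℝ)| + |(α:ℝ)| * |(x:ℝ) - (z:ℝ)| := by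
            refine add_le_add ((hlipR x z).2) ?_
            rw [show (α:ℝ) * (z:ℝ) - (α:ℝ) * (x:ℝ) = (α:ℝ) * ((z:ℝ) - (x:ℝ)) from by ring,
              abs_mul, abs_sub_comm (z:ℝ) (x:ℝ)]
      _ = (K₀ + |(α:ℝ)|) * |(x:ℝ) - (z:ℝ)| := by ring
      _ ≤ (K₀ + |(α:ℝ)|) * ((p:ℝ)^n)⁻¹ := by
            apply mul_le_mul_of_nonneg_left hxzR (by positivity)
    have hrzero : r = 0 := by
      by_contra hrne
      have hrpos : (0:ℝ) < |(r:ℝ)| := by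
        simp only [abs_pos]
        exact_mod_cast hrne
      obtain ⟨n, hn⟩ : ∃ n : ℕ, (K₀ + |(α:ℝ)|) / |(r:ℝ)| < (p:ℝ)^n :=
        pow_unbounded_of_one_lt _ hpR1
      have h2 : (K₀ + |(α:ℝ)|) * ((p:ℝ)^n)⁻¹ < |(r:ℝ)| := by
        rw [mul_inv_lt_iff₀ (by positivity)]
        rw [div_lt_iff₀ hrpos] at hn
        linarith
      exact absurd (lt_of_le_of_lt (hbound n) h2) (lt_irrefl _)
    have hfinal : φ x - (α * x + β) = 0 := by rw [← hr]; exact hrzero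
    linarith [hfinal]
end

section
/- Let p be a prime and let φ: ℚ → ℚ be a bijection with φ(0) = 0 that is K₀-bilipschitz for both the real and the p-adic absolute values and quasicompatible with H. Then for every positive integer L coprime to p there exists s₀ > 0 such that: for every parallelogram (a,b,c,d) in (1/L)·ℤ[1/p] with b ≠ a, c ≠ a, per(P) ≤ L and shape(P) > s₀, the image is again a parallelogram, i.e. φ(a) − φ(c) = φ(b) − φ(d). -/
/-- Every element of `ZOneOver p` can be written as `m / p^k`. -/
lemma ZOneOver_mem (p : ℕ) (hp : p ≠ 0) (x : ℚ) (hx : x ∈ Subring.closure {((p : ℚ))⁻¹}) :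
    ∃ (k : ℕ) (m : ℤ), x * (p : ℚ) ^ k = (m : ℚ) := by
  have hS : Subring.closure {((p : ℚ))⁻¹} ≤
      { carrier := {x : ℚ | ∃ (k : ℕ) (m : ℤ), x * (p : ℚ) ^ k = (m : ℚ)}
        one_mem' := ⟨0, 1, by norm_num⟩
        zero_mem' := ⟨0, 0, by norm_num⟩
        mul_mem' := by
          rintro a b ⟨k1, m1, h1⟩ ⟨k2, m2, h2⟩
          refine ⟨k1 + k2, m1 * m2, ?_⟩
          push_cast
          rw [pow_add, ← h1, ← h2]
          ring
        add_mem' := by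
          rintro a b ⟨k1, m1, h1⟩ ⟨k2, m2, h2⟩
          refine ⟨k1 + k2, m1 * (p:ℤ) ^ k2 + m2 * (p:ℤ) ^ k1, ?_⟩
          push_cast
          rw [pow_add, ← h1, ← h2]
          ring
        neg_mem' := by
          rintro a ⟨k, m, h⟩
          refine ⟨k, -m, ?_⟩
          push_cast
          rw [← h]; ring } := by
    apply Subring.closure_le.mpr
    intro y hy
    rcases hy with rfl
    exact ⟨1, 1, by field_simp; norm_num⟩
  exact hS hx

/-- nonzero integers: `1 ≤ |m| * ‖m‖_p`. -/
lemma int_prod_norm (p : ℕ) [Fact p.Prime] (m : ℤ) (hm : m ≠ 0) :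
    (1:ℝ) ≤ |(m : ℝ)| * ‖((m : ℤ) : ℚ_[p])‖ := by
  have hnorm : ‖((m : ℤ) : ℚ_[p])‖ = (p:ℝ) ^ (-(padicValInt p m : ℤ)) := by
    have : ((m : ℤ) : ℚ_[p]) = (((m : ℚ)) : ℚ_[p]) := by push_cast; ring
    rw [this, Padic.eq_padicNorm,
      padicNorm.eq_zpow_of_nonzero (by exact_mod_cast hm), padicValRat.of_int]
    push_cast
    ring
  have hdvd : (p:ℤ) ^ padicValInt p m ∣ |m| := (dvd_abs _ _).mpr (padicValInt_dvd m)
  have hle : (p:ℤ) ^ padicValInt p m ≤ |m| := Int.le_of_dvd (abs_pos.mpr hm) hdvd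
  have hp1 : (1:ℝ) < p := by exact_mod_cast (Fact.out : p.Prime).one_lt
  have hple : ((p:ℝ)) ^ (padicValInt p m : ℤ) ≤ |(m:ℝ)| := by
    rw [zpow_natCast]
    exact_mod_cast hle
  rw [hnorm]
  calc (1:ℝ) = (p:ℝ) ^ (padicValInt p m : ℤ) * (p:ℝ) ^ (-(padicValInt p m : ℤ)) := by
        rw [← zpow_add₀ (by positivity : (p:ℝ) ≠ 0), add_neg_cancel, zpow_zero]
    _ ≤ |(m:ℝ)| * (p:ℝ) ^ (-(padicValInt p m : ℤ)) := by gcongr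

/-- product lower bound for elements of `(1/M)ℤ[1/p]`. -/
lemma prod_lower (p : ℕ) [Fact p.Prime] (M : ℕ) (hM : 0 < M) (hMp : Nat.Coprime M p)
    (x : ℚ) (hx : x ≠ 0) (hmem : (M : ℚ) * x ∈ ZOneOver p) :
    (1:ℝ) / M ≤ |(x : ℝ)| * ‖(x : ℚ_[p])‖ := by
  have hp : p ≠ 0 := (Fact.out : p.Prime).ne_zero
  obtain ⟨k, m, hkm⟩ := ZOneOver_mem p hp _ hmem
  have hm : m ≠ 0 := by
    intro h
    rw [h] at hkm
    push_cast at hkm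
    have : (M:ℚ) ≠ 0 := by exact_mod_cast hM.ne'
    have : (p:ℚ) ≠ 0 := by exact_mod_cast hp
    rcases mul_eq_zero.mp hkm with h' | h'
    · rcases mul_eq_zero.mp h' with h'' | h'' <;> tauto
    · exact (pow_ne_zero k ‹(p:ℚ) ≠ 0›) h'
  -- real equation
  have hR : (M:ℝ) * |(x:ℝ)| * (p:ℝ) ^ k = |(m:ℝ)| := by
    have := congrArg (fun q : ℚ => |(q : ℝ)|) hkm
    simp only [Rat.cast_mul, Rat.cast_pow, Rat.cast_natCast, Rat.cast_intCast, abs_mul] at this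
    rw [abs_of_nonneg (by positivity : (0:ℝ) ≤ (M:ℝ)), abs_of_nonneg (by positivity : (0:ℝ) ≤ (p:ℝ)^k)] at this
    linarith [this]
  -- p-adic equation
  have hMnorm : ‖((M:ℤ) : ℚ_[p])‖ = 1 := by
    have h1 : ‖((M:ℤ) : ℚ_[p])‖ ≤ 1 := Padic.norm_int_le_one _
    have h2 : ¬ ((p:ℤ) ∣ (M:ℤ)) := by
      rw [Int.natCast_dvd_natCast]
      intro hdvd
      exact (Fact.out : p.Prime).ne_one (Nat.Coprime.eq_one_of_dvd hMp.symm hdvd)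
    have := (Padic.norm_intCast_lt_one_iff (k := (M:ℤ))).not.mpr h2
    push_neg at this
    linarith
  have hP : ‖(x : ℚ_[p])‖ * (p:ℝ) ^ (-(k:ℤ)) = ‖((m:ℤ) : ℚ_[p])‖ := by
    have := congrArg (fun q : ℚ => ‖(q : ℚ_[p])‖) hkm
    simp only [Rat.cast_mul, Rat.cast_pow, Rat.cast_natCast, Rat.cast_intCast] at this
    rw [norm_mul, norm_mul] at this
    · rw [show ((M:ℚ_[p])) = (((M:ℤ)):ℚ_[p]) by push_cast; ring] at this
      rw [hMnorm, one_mul] at this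
      rw [show ‖(p:ℚ_[p])^k‖ = (p:ℝ)^(-(k:ℤ)) from Padic.norm_p_pow k] at this
      exact_mod_cast this
  have hprod : (1:ℝ) ≤ ((M:ℝ) * |(x:ℝ)| * (p:ℝ)^k) * (‖(x : ℚ_[p])‖ * (p:ℝ) ^ (-(k:ℤ))) := by
    rw [hR, hP]; exact int_prod_norm p m hm
  have hpk : ((p:ℝ)^k) * ((p:ℝ) ^ (-(k:ℤ))) = 1 := by
    rw [← zpow_natCast (p:ℝ) k, ← zpow_add₀ (by positivity : (p:ℝ) ≠ 0), add_neg_cancel, zpow_zero]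
  have : (1:ℝ) ≤ (M:ℝ) * (|(x:ℝ)| * ‖(x : ℚ_[p])‖) := by nlinarith [hprod, hpk]
  rw [div_le_iff₀ (by positivity : (0:ℝ) < (M:ℝ))]
  linarith

/-- pair bound from delta. -/
lemma pair_bound (p : ℕ) [Fact p.Prime] (x y : ℚ) (L : ℝ)
    (h : deltaH p (diagQ p '' {x, y}) ≤ L) :
    |(x:ℝ) - (y:ℝ)| * ‖(x:ℚ_[p]) - (y:ℚ_[p])‖ ≤ (L + 1)^2 := by
  have hL1 : deltaH p (diagQ p '' {x, y}) < L + 1 := lt_of_le_of_lt h (by linarith)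
  obtain ⟨n, hn⟩ := exists_lt_of_ciInf_lt hL1
  have himg : scaleH p n '' (diagQ p '' {x, y}) = {scaleH p n (diagQ p x), scaleH p n (diagQ p y)} := by
    rw [Set.image_insert_eq, Set.image_singleton, Set.image_insert_eq, Set.image_singleton]
  rw [himg, Metric.diam_pair, Prod.dist_eq] at hn
  have hreal : dist ((scaleH p n (diagQ p x)).1) ((scaleH p n (diagQ p y)).1)
      = (p:ℝ)^(2*n) * |(x:ℝ) - (y:ℝ)| := by
    simp only [scaleH, diagQ, Real.dist_eq, ← mul_sub, abs_mul]
    rw [abs_of_nonneg (by positivity : (0:ℝ) ≤ (p:ℝ)^(2*n))]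
  have hpadic : dist ((scaleH p n (diagQ p x)).2) ((scaleH p n (diagQ p y)).2)
      = (p:ℝ)^(-(2*n)) * ‖(x:ℚ_[p]) - (y:ℚ_[p])‖ := by
    simp only [scaleH, diagQ, dist_eq_norm, ← mul_sub, norm_mul]
    rw [Padic.norm_p_zpow]
  rw [hreal, hpadic] at hn
  have h1 : (p:ℝ)^(2*n) * |(x:ℝ) - (y:ℝ)| < L + 1 := lt_of_le_of_lt (le_max_left _ _) hn
  have h2 : (p:ℝ)^(-(2*n)) * ‖(x:ℚ_[p]) - (y:ℚ_[p])‖ < L + 1 := lt_of_le_of_lt (le_max_right _ _) hn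
  have hp0 : (0:ℝ) < p := by exact_mod_cast (Fact.out : p.Prime).pos
  have hpk : ((p:ℝ)^(2*n)) * ((p:ℝ) ^ (-(2*n))) = 1 := by
    rw [← zpow_add₀ hp0.ne', add_neg_cancel, zpow_zero]
  have hnn1 : (0:ℝ) ≤ (p:ℝ)^(2*n) * |(x:ℝ) - (y:ℝ)| := by positivity
  have hnn2 : (0:ℝ) ≤ (p:ℝ)^(-(2*n)) * ‖(x:ℚ_[p]) - (y:ℚ_[p])‖ := by positivity
  nlinarith [h1, h2, hnn1, hnn2, hpk]

lemma deltaH_nonneg (p : ℕ) [Fact p.Prime] (S : Set (ℝ × ℚ_[p])) : 0 ≤ deltaH p S :=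
  Real.iInf_nonneg fun _ => Metric.diam_nonneg

lemma norm_ratCast_eq (p : ℕ) [Fact p.Prime] (x : ℚ) (hx : x ≠ 0) :
    ‖(x : ℚ_[p])‖ = (p:ℝ) ^ (-padicValRat p x) := by
  rw [Padic.eq_padicNorm, padicNorm.eq_zpow_of_nonzero hx]
  push_cast
  ring


lemma endgame (p : ℕ) (hp2 : (2:ℝ) ≤ p) (K₀ M LL E1 E2 r : ℝ) (N : ℕ) (v w : ℤ)
    (hM : 0 < M) (hK : 0 < K₀) (hLL : 0 ≤ LL) (hr0 : 0 ≤ r)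
    (hE1 : 0 ≤ E1) (hE2 : 0 ≤ E2)
    (hlow : 1/M ≤ E1 * E2)
    (h1 : E1 ≤ 2*K₀*r) (h2 : E2 ≤ 2*K₀*(p:ℝ)^(-w))
    (hr : r * (p:ℝ)^(-v) ≤ LL)
    (hg : ((N:ℤ)+1) < w - v)
    (hN : 4*K₀^2*LL*M < 2^N) : False := by
  have hp0 : (0:ℝ) < p := lt_of_lt_of_le two_pos hp2
  have hpv : (0:ℝ) < (p:ℝ)^(v:ℤ) := zpow_pos hp0 _
  have hpnv : (0:ℝ) < (p:ℝ)^(-v) := zpow_pos hp0 _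
  have hpnw : (0:ℝ) < (p:ℝ)^(-w) := zpow_pos hp0 _
  have hcancel : (p:ℝ)^(-v) * (p:ℝ)^(v:ℤ) = 1 := by
    rw [← zpow_add₀ hp0.ne', neg_add_cancel, zpow_zero]
  have hr' : r ≤ LL * (p:ℝ)^(v:ℤ) := by
    have := mul_le_mul_of_nonneg_right hr (le_of_lt hpv)
    rw [mul_assoc, hcancel, mul_one] at this
    exact this
  have hE : E1 * E2 ≤ 4*K₀^2 * LL * ((p:ℝ)^(v:ℤ) * (p:ℝ)^(-w)) := by
    calc E1 * E2 ≤ (2*K₀*r) * (2*K₀*(p:ℝ)^(-w)) :=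
          mul_le_mul h1 h2 hE2 (by positivity)
      _ = 4*K₀^2 * (r * (p:ℝ)^(-w)) := by ring
      _ ≤ 4*K₀^2 * ((LL * (p:ℝ)^(v:ℤ)) * (p:ℝ)^(-w)) := by
          have : r * (p:ℝ)^(-w) ≤ (LL * (p:ℝ)^(v:ℤ)) * (p:ℝ)^(-w) :=
            mul_le_mul_of_nonneg_right hr' (le_of_lt hpnw)
          nlinarith [this]
      _ = 4*K₀^2 * LL * ((p:ℝ)^(v:ℤ) * (p:ℝ)^(-w)) := by ring
  have hvw : (p:ℝ)^(v:ℤ) * (p:ℝ)^(-w) = (p:ℝ)^(v - w) := by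
    rw [← zpow_add₀ hp0.ne']; ring_nf
  have hup : (p:ℝ)^(w - v) ≤ 4*K₀^2 * LL * M := by
    have h5 : 1 ≤ (4*K₀^2 * LL * (p:ℝ)^(v - w)) * M := by
      rw [div_le_iff₀ hM] at hlow
      rw [hvw] at hE
      nlinarith [hlow, hE, hM]
    have hcc : (p:ℝ)^(v - w) * (p:ℝ)^(w - v) = 1 := by
      rw [← zpow_add₀ hp0.ne', show v - w + (w - v) = 0 by ring, zpow_zero]
    have hpwv : (0:ℝ) < (p:ℝ)^(w - v) := zpow_pos hp0 _
    nlinarith [mul_le_mul_of_nonneg_right h5 (le_of_lt hpwv), hcc]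
  -- lower bound for p^(w-v)
  have hg0 : (0:ℤ) ≤ w - v := by omega
  set n : ℕ := (w - v).toNat with hn
  have hwv : w - v = (n:ℤ) := (Int.toNat_of_nonneg hg0).symm
  have hNn : N ≤ n := by omega
  have hlb : (2:ℝ)^N ≤ (p:ℝ)^(w - v) := by
    rw [hwv, zpow_natCast]
    calc (2:ℝ)^N ≤ (2:ℝ)^n := pow_le_pow_right₀ (by norm_num) hNn
      _ ≤ (p:ℝ)^n := pow_le_pow_left₀ (by norm_num) hp2 n
  linarith

/-- **Parallelogram Lemma.** Let `φ : ℚ → ℚ` be a bijection with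
`φ(0) = 0` which is `K₀`-bilipschitz for the real and `p`-adic absolute values and
quasicompatible with `H`. For every positive integer `L` coprime to `p` there is
`s₀ > 0` such that every parallelogram `(a,b,c,d)` in `(1/L)·ℤ[1/p]` with `b ≠ a`,
`c ≠ a`, `per(P) ≤ L` and `shape(P) > s₀` is mapped by `φ` to a parallelogram:
`φ(a) − φ(c) = φ(b) − φ(d)`. -/
theorem parallelogram_lemma (p : ℕ) [Fact p.Prime] (φ : ℚ → ℚ)
    (hbij : Function.Bijective φ) (h0 : φ 0 = 0) (K₀ : ℝ) (hK₀ : 1 ≤ K₀)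
    (hlipR : ∀ x y : ℚ,
      K₀⁻¹ * |(x : ℝ) - (y : ℝ)| ≤ |(φ x : ℝ) - (φ y : ℝ)| ∧
      |(φ x : ℝ) - (φ y : ℝ)| ≤ K₀ * |(x : ℝ) - (y : ℝ)|)
    (hlipP : ∀ x y : ℚ,
      K₀⁻¹ * ‖(x : ℚ_[p]) - (y : ℚ_[p])‖ ≤ ‖(φ x : ℚ_[p]) - (φ y : ℚ_[p])‖ ∧
      ‖(φ x : ℚ_[p]) - (φ y : ℚ_[p])‖ ≤ K₀ * ‖(x : ℚ_[p]) - (y : ℚ_[p])‖)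
    (hqc : QuasiCompatible p φ)
    (L : ℕ) (hL : 0 < L) (hLp : Nat.Coprime L p) :
    ∃ s₀ : ℕ, 0 < s₀ ∧ ∀ a b c d : ℚ,
      (L : ℚ) * a ∈ ZOneOver p → (L : ℚ) * b ∈ ZOneOver p →
      (L : ℚ) * c ∈ ZOneOver p → (L : ℚ) * d ∈ ZOneOver p →
      a - c = b - d → b ≠ a → c ≠ a →
      deltaH p (diagQ p '' {a, b}) + deltaH p (diagQ p '' {a, c}) ≤ (L : ℝ) →
      (s₀ : ℤ) < |padicValRat p (b - a) - padicValRat p (c - a)| →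
      φ a - φ c = φ b - φ d := by
  have hp0 : (0:ℝ) < p := by exact_mod_cast (Fact.out : p.Prime).pos
  have hp2 : (2:ℝ) ≤ p := by exact_mod_cast (Fact.out : p.Prime).two_le
  obtain ⟨M, hMpos, hMp, hM⟩ :=
    hqc.1 {x | (L:ℚ) * x ∈ ZOneOver p} ⟨L, hL, hLp, fun x hx => hx⟩
  have hMR : (0:ℝ) < M := by exact_mod_cast hMpos
  obtain ⟨N, hN⟩ := pow_unbounded_of_one_lt (4 * K₀^2 * ((L:ℝ)+1)^2 * M)
      (by norm_num : (1:ℝ) < 2)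
  refine ⟨N + 1, Nat.succ_pos _, fun a b c d ha hb hc hd hpar hba hca hper hshape => ?_⟩
  by_contra hne
  set e : ℚ := (φ a - φ c) - (φ b - φ d) with he
  have he0 : e ≠ 0 := sub_ne_zero.mpr hne
  -- membership
  have hmem : (M:ℚ) * e ∈ ZOneOver p := by
    have h₁ := hM (φ a) ⟨a, ha, rfl⟩
    have h₂ := hM (φ c) ⟨c, hc, rfl⟩
    have h₃ := hM (φ b) ⟨b, hb, rfl⟩
    have h₄ := hM (φ d) ⟨d, hd, rfl⟩
    have hrw : (M:ℚ) * e = ((M:ℚ) * φ a - (M:ℚ) * φ c) - ((M:ℚ) * φ b - (M:ℚ) * φ d) := by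
      rw [he]; ring
    rw [hrw]
    exact Subring.sub_mem _ (Subring.sub_mem _ h₁ h₂) (Subring.sub_mem _ h₃ h₄)
  have hlow : (1:ℝ)/M ≤ |(e:ℝ)| * ‖(e:ℚ_[p])‖ := prod_lower p M hMpos hMp e he0 hmem
  -- pair bounds
  have hd1 : deltaH p (diagQ p '' {a, b}) ≤ (L:ℝ) := by
    have := deltaH_nonneg p (diagQ p '' {a, c}); linarith
  have hd2 : deltaH p (diagQ p '' {a, c}) ≤ (L:ℝ) := by
    have := deltaH_nonneg p (diagQ p '' {a, b}); linarith
  have hab := pair_bound p a b (L:ℝ) hd1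
  have hac := pair_bound p a c (L:ℝ) hd2
  -- notation
  set vb := padicValRat p (b - a) with hvb
  set vc := padicValRat p (c - a) with hvc
  have hsb : ‖(a:ℚ_[p]) - (b:ℚ_[p])‖ = (p:ℝ) ^ (-vb) := by
    rw [show (a:ℚ_[p]) - (b:ℚ_[p]) = -(((b - a : ℚ)) : ℚ_[p]) by push_cast; ring, norm_neg,
      norm_ratCast_eq p _ (sub_ne_zero.mpr hba)]
  have hsc : ‖(a:ℚ_[p]) - (c:ℚ_[p])‖ = (p:ℝ) ^ (-vc) := by
    rw [show (a:ℚ_[p]) - (c:ℚ_[p]) = -(((c - a : ℚ)) : ℚ_[p]) by push_cast; ring, norm_neg,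
      norm_ratCast_eq p _ (sub_ne_zero.mpr hca)]
  -- parallelogram identities
  have hab' : a - b = c - d := by linarith [hpar]
  have hcd_padic : ‖(c:ℚ_[p]) - (d:ℚ_[p])‖ = ‖(a:ℚ_[p]) - (b:ℚ_[p])‖ := by
    rw [show (c:ℚ_[p]) - (d:ℚ_[p]) = ((c - d : ℚ) : ℚ_[p]) by push_cast; ring,
      show (a:ℚ_[p]) - (b:ℚ_[p]) = ((a - b : ℚ) : ℚ_[p]) by push_cast; ring, hab']
  have hbd_padic : ‖(b:ℚ_[p]) - (d:ℚ_[p])‖ = ‖(a:ℚ_[p]) - (c:ℚ_[p])‖ := by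
    rw [show (b:ℚ_[p]) - (d:ℚ_[p]) = ((b - d : ℚ) : ℚ_[p]) by push_cast; ring,
      show (a:ℚ_[p]) - (c:ℚ_[p]) = ((a - c : ℚ) : ℚ_[p]) by push_cast; ring, hpar]
  have hcd_real : |(c:ℝ) - (d:ℝ)| = |(a:ℝ) - (b:ℝ)| := by
    rw [show (c:ℝ) - (d:ℝ) = ((c - d : ℚ) : ℝ) by push_cast; ring,
      show (a:ℝ) - (b:ℝ) = ((a - b : ℚ) : ℝ) by push_cast; ring, hab']
  have hbd_real : |(b:ℝ) - (d:ℝ)| = |(a:ℝ) - (c:ℝ)| := by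
    rw [show (b:ℝ) - (d:ℝ) = ((b - d : ℚ) : ℝ) by push_cast; ring,
      show (a:ℝ) - (c:ℝ) = ((a - c : ℚ) : ℝ) by push_cast; ring, hpar]
  -- lipschitz bounds on e
  have heR : (e:ℝ) = ((φ a : ℝ) - (φ c : ℝ)) - ((φ b : ℝ) - (φ d : ℝ)) := by
    rw [he]; push_cast; ring
  have heP : (e:ℚ_[p]) = ((φ a : ℚ_[p]) - (φ b : ℚ_[p])) - ((φ c : ℚ_[p]) - (φ d : ℚ_[p])) := by
    rw [he]; push_cast; ring
  have heRb : |(e:ℝ)| ≤ 2 * K₀ * |(a:ℝ) - (b:ℝ)| := by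
    have h1 := (hlipR a b).2
    have h2 := (hlipR c d).2
    rw [hcd_real] at h2
    calc |(e:ℝ)| = |((φ a : ℝ) - (φ b : ℝ)) - ((φ c : ℝ) - (φ d : ℝ))| := by rw [heR]; ring_nf
      _ ≤ |(φ a : ℝ) - (φ b : ℝ)| + |(φ c : ℝ) - (φ d : ℝ)| := abs_sub _ _
      _ ≤ 2 * K₀ * |(a:ℝ) - (b:ℝ)| := by linarith
  have heRc : |(e:ℝ)| ≤ 2 * K₀ * |(a:ℝ) - (c:ℝ)| := by
    have h1 := (hlipR a c).2
    have h2 := (hlipR b d).2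
    rw [hbd_real] at h2
    calc |(e:ℝ)| ≤ |(φ a : ℝ) - (φ c : ℝ)| + |(φ b : ℝ) - (φ d : ℝ)| := by
          rw [heR]; exact abs_sub _ _
      _ ≤ 2 * K₀ * |(a:ℝ) - (c:ℝ)| := by linarith
  have hePb : ‖(e:ℚ_[p])‖ ≤ 2 * K₀ * (p:ℝ) ^ (-vb) := by
    have h1 := (hlipP a b).2
    have h2 := (hlipP c d).2
    rw [hcd_padic] at h2
    rw [hsb] at h1 h2
    calc ‖(e:ℚ_[p])‖ ≤ ‖(φ a : ℚ_[p]) - (φ b : ℚ_[p])‖ + ‖(φ c : ℚ_[p]) - (φ d : ℚ_[p])‖ := by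
          rw [heP]; exact norm_sub_le _ _
      _ ≤ 2 * K₀ * (p:ℝ) ^ (-vb) := by linarith
  have hePc : ‖(e:ℚ_[p])‖ ≤ 2 * K₀ * (p:ℝ) ^ (-vc) := by
    have h1 := (hlipP a c).2
    have h2 := (hlipP b d).2
    rw [hbd_padic] at h2
    rw [hsc] at h1 h2
    calc ‖(e:ℚ_[p])‖ = ‖((φ a : ℚ_[p]) - (φ c : ℚ_[p])) - ((φ b : ℚ_[p]) - (φ d : ℚ_[p]))‖ := by
          rw [heP]; ring_nf
      _ ≤ ‖(φ a : ℚ_[p]) - (φ c : ℚ_[p])‖ + ‖(φ b : ℚ_[p]) - (φ d : ℚ_[p])‖ := norm_sub_le _ _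
      _ ≤ 2 * K₀ * (p:ℝ) ^ (-vc) := by linarith
  -- final contradiction, symmetric in the two cases
  have hK0 : (0:ℝ) < K₀ := lt_of_lt_of_le one_pos hK₀
  rw [hsb] at hab
  rw [hsc] at hac
  have hLL0 : (0:ℝ) ≤ ((L:ℝ)+1)^2 := by positivity
  have hshape' : ((N:ℤ)+1) < vb - vc ∨ ((N:ℤ)+1) < vc - vb := by
    rcases lt_abs.mp (by push_cast at hshape ⊢; exact hshape) with h | h
    · left; exact h
    · right; omega
  rcases hshape' with hcase | hcase
  · -- vb - vc large : pair real with (a,c), p-adic with (a,b)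
    exact endgame p hp2 K₀ (M:ℝ) (((L:ℝ)+1)^2) |(e:ℝ)| ‖(e:ℚ_[p])‖ |(a:ℝ) - (c:ℝ)| N vc vb
      hMR hK0 hLL0 (abs_nonneg _) (abs_nonneg _) (norm_nonneg _) hlow heRc hePb hac hcase hN
  · exact endgame p hp2 K₀ (M:ℝ) (((L:ℝ)+1)^2) |(e:ℝ)| ‖(e:ℚ_[p])‖ |(a:ℝ) - (b:ℝ)| N vb vc
      hMR hK0 hLL0 (abs_nonneg _) (abs_nonneg _) (norm_nonneg _) hlow heRb hePc hab hcase hN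
end

section
/- Let p be a prime and B a positive integer. There exists s₀ ∈ ℕ with the following property: for all integers x, y, z, w with 1 ≤ |x|, |y|, |z|, |w| ≤ B, none of which is divisible by p, and all integers n, m, N, M such that in ℚ one has pⁿ·x + p^N·z = p^m·y + p^M·w with this common value nonzero, if n − m > s₀ then p^N·z = p^m·y and p^M·w = pⁿ·x (equivalently, N = m, z = y, M = n and w = x). -/
lemma pll_lemA (p B r : ℕ) (hp : p.Prime) (hr : (2*B:ℤ) ≤ (p:ℤ)^r)
    (y w : ℤ) (hy : ¬ (p:ℤ) ∣ y)
    (hyB : |y| ≤ (B:ℤ)) (hwB : |w| ≤ (B:ℤ))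
    (b d e : ℕ) (hbd : b ≤ d)
    (hne : (p:ℤ)^b*y + (p:ℤ)^d*w ≠ 0)
    (hdvd : (p:ℤ)^e ∣ (p:ℤ)^b*y + (p:ℤ)^d*w) : e ≤ b + r := by
  have hp' : Prime (p:ℤ) := Nat.prime_iff_prime_int.mp hp
  have hp1 : (1:ℤ) < (p:ℤ) := by exact_mod_cast hp.one_lt
  have hp0 : (0:ℤ) < (p:ℤ) := by linarith
  rcases lt_or_eq_of_le hbd with hlt | heqbd
  · -- b < d : valuation is exactly b
    have hpd : (p:ℤ)^d = (p:ℤ)^b * (p:ℤ)^(d-b) := by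
      rw [← pow_add]; congr 1; omega
    have hdecomp : (p:ℤ)^b*y + (p:ℤ)^d*w = (p:ℤ)^b * (y + (p:ℤ)^(d-b)*w) := by
      rw [hpd]; ring
    have hk : ¬ (p:ℤ) ∣ (y + (p:ℤ)^(d-b)*w) := by
      intro hdk
      apply hy
      have h2 : (p:ℤ) ∣ (p:ℤ)^(d-b)*w := Dvd.dvd.mul_right (dvd_pow_self _ (by omega)) w
      have := dvd_sub hdk h2
      simpa using this
    have hcop : IsCoprime ((p:ℤ)^e) (y + (p:ℤ)^(d-b)*w) :=
      IsCoprime.pow_left ((hp'.coprime_iff_not_dvd).mpr hk)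
    rw [hdecomp] at hdvd
    have hdvd2 : (p:ℤ)^e ∣ (p:ℤ)^b := hcop.dvd_of_dvd_mul_right hdvd
    have hle : (p:ℤ)^e ≤ (p:ℤ)^b := Int.le_of_dvd (by positivity) hdvd2
    have : e ≤ b := (pow_le_pow_iff_right₀ hp1).mp hle
    omega
  · -- b = d
    subst heqbd
    have hdecomp : (p:ℤ)^b*y + (p:ℤ)^b*w = (p:ℤ)^b * (y + w) := by ring
    rw [hdecomp] at hdvd hne
    have hyw : y + w ≠ 0 := by
      intro h; apply hne; rw [h, mul_zero]
    by_cases hbe : e ≤ b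
    · omega
    · have he : e = b + (e - b) := by omega
      rw [he, pow_add] at hdvd
      have hdvd2 : (p:ℤ)^(e-b) ∣ y + w :=
        (mul_dvd_mul_iff_left (by positivity : (p:ℤ)^b ≠ 0)).mp hdvd
      have h1 : (p:ℤ)^(e-b) ≤ |y + w| := Int.le_of_dvd (abs_pos.mpr hyw) ((dvd_abs _ _).mpr hdvd2)
      have h2 : |y + w| ≤ 2*B := by
        calc |y + w| ≤ |y| + |w| := abs_add_le _ _
        _ ≤ 2*B := by linarith
      have h3 : (p:ℤ)^(e-b) ≤ (p:ℤ)^r := le_trans (le_trans h1 h2) hr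
      have : e - b ≤ r := (pow_le_pow_iff_right₀ hp1).mp h3
      omega

-- symmetric wrapper
lemma pll_lemV (p B r : ℕ) (hp : p.Prime) (hr : (2*B:ℤ) ≤ (p:ℤ)^r)
    (y w : ℤ) (hy : ¬ (p:ℤ) ∣ y) (hw : ¬ (p:ℤ) ∣ w)
    (hyB : |y| ≤ (B:ℤ)) (hwB : |w| ≤ (B:ℤ))
    (b d e : ℕ)
    (hne : (p:ℤ)^b*y + (p:ℤ)^d*w ≠ 0)
    (hdvd : (p:ℤ)^e ∣ (p:ℤ)^b*y + (p:ℤ)^d*w) : e ≤ b + r := by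
  rcases le_total b d with h | h
  · exact pll_lemA p B r hp hr y w hy hyB hwB b d e h hne hdvd
  · have := pll_lemA p B r hp hr w y hw hwB hyB d b e h (by rw [add_comm] at hne; exact hne)
      (by rw [add_comm] at hdvd; exact hdvd)
    omega

set_option maxHeartbeats 1000000 in
lemma pll_core (p B r : ℕ) (hp : p.Prime) (hB : 0 < B) (hr : (2*B:ℤ) ≤ (p:ℤ)^r)
    (x y z w : ℤ)
    (hxB : |x| ≤ (B:ℤ)) (hyB : |y| ≤ (B:ℤ)) (hzB : |z| ≤ (B:ℤ)) (hwB : |w| ≤ (B:ℤ))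
    (hx1 : 1 ≤ |x|)
    (hx : ¬ (p:ℤ) ∣ x) (hy : ¬ (p:ℤ) ∣ y) (hz : ¬ (p:ℤ) ∣ z) (hw : ¬ (p:ℤ) ∣ w)
    (a b c d : ℕ)
    (heq : (p:ℤ)^a*x + (p:ℤ)^c*z = (p:ℤ)^b*y + (p:ℤ)^d*w)
    (hne : (p:ℤ)^a*x + (p:ℤ)^c*z ≠ 0)
    (hab : b + (3*r+1) ≤ a) :
    (p:ℤ)^c*z = (p:ℤ)^b*y ∧ (p:ℤ)^d*w = (p:ℤ)^a*x := by
  have hp1 : (1:ℤ) < (p:ℤ) := by exact_mod_cast hp.one_lt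
  have hp0 : (0:ℤ) < (p:ℤ) := by linarith
  have hne' : (p:ℤ)^b*y + (p:ℤ)^d*w ≠ 0 := heq ▸ hne
  have hmono : ∀ i j : ℕ, i ≤ j → (p:ℤ)^i ≤ (p:ℤ)^j :=
    fun i j h => pow_le_pow_right₀ (le_of_lt hp1) h
  -- Step 1 : c < a
  have hca : c < a := by
    by_contra hac
    push_neg at hac
    have hdvd : (p:ℤ)^a ∣ (p:ℤ)^b*y + (p:ℤ)^d*w := by
      rw [← heq]
      exact dvd_add (Dvd.dvd.mul_right (dvd_refl _) x)
        (Dvd.dvd.mul_right (pow_dvd_pow _ hac) z)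
    have := pll_lemV p B r hp hr y w hy hw hyB hwB b d a hne' hdvd
    omega
  -- Step 2 : c ≤ b + r
  have hcb : c ≤ b + r := by
    have hdvd : (p:ℤ)^c ∣ (p:ℤ)^b*y + (p:ℤ)^d*w := by
      rw [← heq]
      exact dvd_add (Dvd.dvd.mul_right (pow_dvd_pow _ (le_of_lt hca)) x)
        (Dvd.dvd.mul_right (dvd_refl _) z)
    exact pll_lemV p B r hp hr y w hy hw hyB hwB b d c hne' hdvd
  -- Step 3 : the difference T
  set T : ℤ := (p:ℤ)^a*x - (p:ℤ)^d*w with hTdef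
  have hT : T = (p:ℤ)^b*y - (p:ℤ)^c*z := by rw [hTdef]; linarith
  by_cases hT0 : T = 0
  · constructor
    · have : (p:ℤ)^b*y - (p:ℤ)^c*z = 0 := by rw [← hT]; exact hT0
      linarith
    · rw [hTdef] at hT0; linarith
  · exfalso
    -- upper bound on |T|
    have hTub : |T| ≤ (p:ℤ)^(b+2*r) := by
      have h1 : |T| ≤ |(p:ℤ)^b*y| + |(p:ℤ)^c*z| := by
        rw [hT]; exact abs_sub _ _
      have h2 : |(p:ℤ)^b*y| = (p:ℤ)^b * |y| := by
        rw [abs_mul, abs_pow, abs_of_pos hp0]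
      have h3 : |(p:ℤ)^c*z| = (p:ℤ)^c * |z| := by
        rw [abs_mul, abs_pow, abs_of_pos hp0]
      have h4 : (p:ℤ)^b * |y| ≤ (p:ℤ)^(b+r) * B := by
        have := hmono b (b+r) (by omega)
        have hy0 : (0:ℤ) ≤ |y| := abs_nonneg _
        nlinarith [pow_pos hp0 b]
      have h5 : (p:ℤ)^c * |z| ≤ (p:ℤ)^(b+r) * B := by
        have := hmono c (b+r) hcb
        have hz0 : (0:ℤ) ≤ |z| := abs_nonneg _
        nlinarith [pow_pos hp0 c]
      have h6 : (p:ℤ)^(b+r) * B + (p:ℤ)^(b+r) * B = (p:ℤ)^(b+r) * (2*B) := by ring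
      have h7 : (p:ℤ)^(b+r) * (2*B) ≤ (p:ℤ)^(b+r) * (p:ℤ)^r := by
        have := pow_pos hp0 (b+r)
        nlinarith
      have h8 : (p:ℤ)^(b+r) * (p:ℤ)^r = (p:ℤ)^(b+2*r) := by
        rw [← pow_add]; congr 1; omega
      linarith
    -- d ≤ b + 2r
    have hdvdT : (p:ℤ)^(min a d) ∣ T :=
      dvd_sub (Dvd.dvd.mul_right (pow_dvd_pow _ (min_le_left _ _)) x)
        (Dvd.dvd.mul_right (pow_dvd_pow _ (min_le_right _ _)) w)
    have hTlb1 : (p:ℤ)^(min a d) ≤ |T| :=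
      Int.le_of_dvd (abs_pos.mpr hT0) ((dvd_abs _ _).mpr hdvdT)
    have hmind : min a d ≤ b + 2*r := by
      have := le_trans hTlb1 hTub
      exact (pow_le_pow_iff_right₀ hp1).mp this
    have hd : d ≤ b + 2*r := by
      rcases min_cases a d with ⟨h1, h2⟩ | ⟨h1, h2⟩ <;> omega
    -- lower bound: |T| ≥ p^a - B p^(b+2r)
    have hTlb2 : (p:ℤ)^a - (p:ℤ)^(b+2*r) * B ≤ |T| := by
      have h1 : |(p:ℤ)^a*x| - |(p:ℤ)^d*w| ≤ |T| := by
        rw [hTdef]; exact abs_sub_abs_le_abs_sub _ _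
      have h2 : (p:ℤ)^a ≤ |(p:ℤ)^a*x| := by
        rw [abs_mul, abs_pow, abs_of_pos hp0]
        nlinarith [pow_pos hp0 a]
      have h3 : |(p:ℤ)^d*w| ≤ (p:ℤ)^(b+2*r) * B := by
        rw [abs_mul, abs_pow, abs_of_pos hp0]
        have := hmono d (b+2*r) hd
        have hw0 : (0:ℤ) ≤ |w| := abs_nonneg _
        nlinarith [pow_pos hp0 d]
      linarith
    -- combine: p^a ≤ p^(b+2r) + B p^(b+2r) ≤ 2B p^(b+2r) ≤ p^(b+3r)
    have hfin : (p:ℤ)^a ≤ (p:ℤ)^(b+3*r) := by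
      have h1 : (p:ℤ)^a ≤ (p:ℤ)^(b+2*r) + (p:ℤ)^(b+2*r) * B := by linarith
      have h2 : (p:ℤ)^(b+2*r) + (p:ℤ)^(b+2*r) * B ≤ (p:ℤ)^(b+2*r) * (2*B) := by
        have hB1 : (1:ℤ) ≤ B := by exact_mod_cast hB
        nlinarith [pow_pos hp0 (b+2*r)]
      have h3 : (p:ℤ)^(b+2*r) * (2*B) ≤ (p:ℤ)^(b+2*r) * (p:ℤ)^r := by
        nlinarith [pow_pos hp0 (b+2*r)]
      have h4 : (p:ℤ)^(b+2*r) * (p:ℤ)^r = (p:ℤ)^(b+3*r) := by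
        rw [← pow_add]; congr 1; omega
      linarith
    have : a ≤ b + 3*r := (pow_le_pow_iff_right₀ hp1).mp hfin
    omega

/-- **arithmetic core of the Parallelogram Lemma.** For a prime `p` and a
bound `B`, there is `s₀` such that whenever `x, y, z, w` are nonzero integers of absolute
value at most `B`, none divisible by `p`, and `pⁿ·x + p^N·z = p^m·y + p^M·w` in `ℚ` with
nonzero common value and `n − m > s₀`, the identity holds term by term:
`p^N·z = p^m·y` and `p^M·w = pⁿ·x`. -/
theorem parallelogram_arithmetic_core (p : ℕ) (hp : p.Prime) (B : ℕ) (hB : 0 < B) :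
    ∃ s₀ : ℕ, ∀ x y z w : ℤ,
      1 ≤ |x| → |x| ≤ (B : ℤ) → 1 ≤ |y| → |y| ≤ (B : ℤ) →
      1 ≤ |z| → |z| ≤ (B : ℤ) → 1 ≤ |w| → |w| ≤ (B : ℤ) →
      ¬ (p : ℤ) ∣ x → ¬ (p : ℤ) ∣ y → ¬ (p : ℤ) ∣ z → ¬ (p : ℤ) ∣ w →
      ∀ n m N M : ℤ,
        (p : ℚ) ^ n * (x : ℚ) + (p : ℚ) ^ N * (z : ℚ)
          = (p : ℚ) ^ m * (y : ℚ) + (p : ℚ) ^ M * (w : ℚ) →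
        (p : ℚ) ^ n * (x : ℚ) + (p : ℚ) ^ N * (z : ℚ) ≠ 0 →
        (s₀ : ℤ) < n - m →
        (p : ℚ) ^ N * (z : ℚ) = (p : ℚ) ^ m * (y : ℚ) ∧
          (p : ℚ) ^ M * (w : ℚ) = (p : ℚ) ^ n * (x : ℚ) := by
  refine ⟨6*B+1, ?_⟩
  intro x y z w hx1 hxB hy1 hyB hz1 hzB hw1 hwB hx hy hz hw n m N M heq hne hs
  have hpq0 : (p:ℚ) ≠ 0 := by
    exact_mod_cast hp.ne_zero
  have hr : (2*B:ℤ) ≤ (p:ℤ)^(2*B) := by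
    have h1 : 2*B < 2^(2*B) := Nat.lt_two_pow_self (n := 2*B)
    have h2 : 2^(2*B) ≤ p^(2*B) := Nat.pow_le_pow_left hp.two_le _
    exact_mod_cast le_of_lt (lt_of_lt_of_le h1 h2)
  set k : ℤ := min (min n m) (min N M) with hk
  have hkn : k ≤ n := le_trans (min_le_left _ _) (min_le_left _ _)
  have hkm : k ≤ m := le_trans (min_le_left _ _) (min_le_right _ _)
  have hkN : k ≤ N := le_trans (min_le_right _ _) (min_le_left _ _)
  have hkM : k ≤ M := le_trans (min_le_right _ _) (min_le_right _ _)
  have key : ∀ t : ℤ, k ≤ t → (p:ℚ)^t = (((p:ℤ)^((t-k).toNat) : ℤ) : ℚ) * (p:ℚ)^k := by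
    intro t ht
    have htn : (((t-k).toNat : ℕ) : ℤ) = t - k := Int.toNat_of_nonneg (by omega)
    have h1 : (p:ℚ)^t = (p:ℚ)^((((t-k).toNat : ℕ) : ℤ) + k) := by
      congr 1; omega
    rw [h1, zpow_add₀ hpq0, zpow_natCast]
    push_cast
    ring
  set a : ℕ := (n-k).toNat with hadef
  set b : ℕ := (m-k).toNat with hbdef
  set c : ℕ := (N-k).toNat with hcdef
  set d : ℕ := (M-k).toNat with hddef
  have ha : (a:ℤ) = n - k := Int.toNat_of_nonneg (by omega)
  have hb : (b:ℤ) = m - k := Int.toNat_of_nonneg (by omega)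
  have e1 := key n hkn
  have e2 := key m hkm
  have e3 := key N hkN
  have e4 := key M hkM
  rw [← hadef] at e1
  rw [← hbdef] at e2
  rw [← hcdef] at e3
  rw [← hddef] at e4
  rw [e1, e2, e3, e4] at heq
  rw [e1, e3] at hne
  push_cast at heq hne
  -- integer equation
  have heqZ : (p:ℤ)^a*x + (p:ℤ)^c*z = (p:ℤ)^b*y + (p:ℤ)^d*w := by
    have h1 : (((p:ℤ)^a*x + (p:ℤ)^c*z : ℤ) : ℚ) * (p:ℚ)^k
        = (((p:ℤ)^b*y + (p:ℤ)^d*w : ℤ) : ℚ) * (p:ℚ)^k := by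
      push_cast
      linear_combination heq
    have h2 := mul_right_cancel₀ (zpow_ne_zero k hpq0) h1
    exact_mod_cast h2
  have hneZ : (p:ℤ)^a*x + (p:ℤ)^c*z ≠ 0 := by
    intro h0
    apply hne
    have : (((p:ℤ)^a*x + (p:ℤ)^c*z : ℤ) : ℚ) * (p:ℚ)^k = 0 := by
      rw [h0]; push_cast; ring
    push_cast at this
    linear_combination this
  have hab : b + (3*(2*B)+1) ≤ a := by
    have hs' : (6*B+1 : ℤ) < n - m := by exact_mod_cast hs
    omega
  obtain ⟨g1, g2⟩ := pll_core p B (2*B) hp hB hr x y z w hxB hyB hzB hwB hx1 hx hy hz hw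
    a b c d heqZ hneZ hab
  constructor
  · rw [e3, e2]
    have g1Q : (((p:ℤ)^c*z : ℤ) : ℚ) = (((p:ℤ)^b*y : ℤ) : ℚ) := by exact_mod_cast g1
    push_cast at g1Q ⊢
    linear_combination (p:ℚ)^k * g1Q
  · rw [e4, e1]
    have g2Q : (((p:ℤ)^d*w : ℤ) : ℚ) = (((p:ℤ)^a*x : ℤ) : ℚ) := by exact_mod_cast g2
    push_cast at g2Q ⊢
    linear_combination (p:ℚ)^k * g2Q
end

section
/- In the hyperbolic upper half-plane ℍ = {z ∈ ℂ : Im z > 0} with the metric of constant curvature −1 (from ds² = (dx² + dy²)/y²), let 0 < b ≤ a, let L_a = {z ∈ ℍ : Im z = a} be the horocycle based at ∞ at Euclidean height a, and let C_b = {z ∈ ℍ : |z − i·b/2| = b/2} be the horocycle based at 0 of Euclidean diameter b. Then the infimum of hyperbolic distances between points of L_a and points of C_b equals log(a/b). -/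
open UpperHalfPlane

lemma horocycle_key (a b : ℝ) (hb : 0 < b) (hab : b ≤ a) (z w : UpperHalfPlane)
    (hz : z.im = a) (hw : ‖(w : ℂ) - Complex.I * (b / 2)‖ = b / 2) :
    Real.log (a / b) ≤ dist z w := by
  have ha : 0 < a := hb.trans_le hab
  have ht : 0 < w.im := w.im_pos
  -- circle condition: re² + im² = b * im
  have hcirc : w.re ^ 2 + w.im ^ 2 = b * w.im := by
    have h2 : ‖(w : ℂ) - Complex.I * (b / 2)‖ ^ 2 = (b / 2) ^ 2 := by rw [hw]
    rw [show ((b : ℂ) / 2) = ((b / 2 : ℝ) : ℂ) by push_cast; ring] at h2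
    rw [Complex.sq_norm, Complex.normSq_apply] at h2
    simp only [Complex.sub_re, Complex.sub_im, Complex.mul_re, Complex.mul_im,
      Complex.I_re, Complex.I_im, Complex.ofReal_re, Complex.ofReal_im, coe_re, coe_im] at h2
    nlinarith [h2]
  have htb : w.im ≤ b := by nlinarith [sq_nonneg w.re]
  have hcosh : Real.cosh (Real.log (a / b)) ≤ Real.cosh (dist z w) := by
    rw [Real.cosh_log (by positivity), cosh_dist', hz]
    have heq : (a / b + (a / b)⁻¹) / 2 = (a ^ 2 + b ^ 2) / (2 * a * b) := by
      rw [inv_div]; field_simp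
    rw [heq, div_le_div_iff₀ (by positivity) (by positivity)]
    have h1 : (0 : ℝ) ≤ (b - w.im) * (a ^ 2 - b * w.im) :=
      mul_nonneg (sub_nonneg.2 htb) (sub_nonneg.2 (by nlinarith))
    nlinarith [mul_nonneg ha.le h1, mul_nonneg (mul_nonneg ha.le hb.le) (sq_nonneg (z.re - w.re))]
  have := Real.cosh_le_cosh.1 hcosh
  calc Real.log (a / b) ≤ |Real.log (a / b)| := le_abs_self _
    _ ≤ |dist z w| := this
    _ = dist z w := abs_of_nonneg dist_nonneg

/-- In the hyperbolic upper half-plane, for `0 < b ≤ a`, the infimum of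
hyperbolic distances between points of the horocycle `L_a = {Im z = a}` (based at `∞`)
and points of the horocycle `C_b = {|z − i·b/2| = b/2}` (based at `0`, of Euclidean
diameter `b`) equals `log (a / b)`. -/
theorem horocycle_inf_dist (a b : ℝ) (hb : 0 < b) (hab : b ≤ a) :
    sInf {r : ℝ | ∃ z w : UpperHalfPlane, z.im = a ∧
        ‖(w : ℂ) - Complex.I * (b / 2)‖ = b / 2 ∧ r = dist z w}
      = Real.log (a / b) := by
  have ha : 0 < a := hb.trans_le hab
  set S := {r : ℝ | ∃ z w : UpperHalfPlane, z.im = a ∧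
      ‖(w : ℂ) - Complex.I * (b / 2)‖ = b / 2 ∧ r = dist z w}
  set z0 : UpperHalfPlane := ⟨⟨0, a⟩, by simpa using ha⟩
  set w0 : UpperHalfPlane := ⟨⟨0, b⟩, by simpa using hb⟩
  have hz0 : z0.im = a := rfl
  have hw0 : ‖(w0 : ℂ) - Complex.I * (b / 2)‖ = b / 2 := by
    have : ((w0 : ℂ) - Complex.I * (b / 2)) = Complex.I * (b / 2) := by
      simp [w0, Complex.ext_iff]
      ring
    rw [this]
    simp [abs_of_nonneg hb.le]
  have hd : dist z0 w0 = Real.log (a / b) := by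
    rw [UpperHalfPlane.dist_of_re_eq (show z0.re = w0.re by rfl), hz0, Real.dist_eq,
      ← Real.log_div (by positivity) (by positivity)]
    have : w0.im = b := rfl
    rw [this]
    exact abs_of_nonneg (Real.log_nonneg ((one_le_div hb).2 hab))
  have hmem : Real.log (a / b) ∈ S := ⟨z0, w0, hz0, hw0, hd.symm⟩
  have hlb : ∀ r ∈ S, Real.log (a / b) ≤ r := by
    rintro r ⟨z, w, hz, hw, rfl⟩
    exact horocycle_key a b hb hab z w hz hw
  exact le_antisymm (csInf_le ⟨_, hlb⟩ hmem) (le_csInf ⟨_, hmem⟩ hlb)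
end
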